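/- arXiv:2602.05457 — 7 statements merged into one kernel-verified Lean document; each statement's English description precedes it below -/
import Mathlib

section
/- Let (P) have finitely many constraints, i.e. (P): inf f_0(x) subject to f_k(x) ≤ 0 for k = 1,…,m, x ∈ X, where f_0, f_1,…,f_m : X → ℝ ∪ {+∞} are proper convex functions. Assume each f_k (k = 1,…,m) is finite-valued and continuous at some point of dom f_0, and that the Slater condition holds: there exists x_0 ∈ dom f_0 with max_{1≤k≤m} f_k(x_0) < 0. Then the optimal values of (P) and of its biconjugate relaxation coincide: inf{ f_0(x) : f_k(x) ≤ 0 for k = 1,…,m, x ∈ X } = inf{ f_0**(z) : f_k**(z) ≤ 0 for k = 1,…,m, z ∈ X** }. -/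
open Filter Topology Set NormedSpace
open scoped Classical

noncomputable section

/-- Effective domain of an extended-real-valued function. -/
def edom {Z : Type*} (g : Z → EReal) : Set Z := {z | g z ≠ ⊤}

/-- Indicator function of a set, with values in `EReal`. -/
def eindicator {Z : Type*} (A : Set Z) : Z → EReal := fun z => if z ∈ A then 0 else ⊤

/-- Scalar multiplication of an `EReal` value by a nonnegative real, with the
convention `0 · (+∞) = +∞`. -/
def smulInf (a : ℝ) (v : EReal) : EReal := if v = ⊤ then ⊤ else (a : EReal) * v

variable {X : Type*} [NormedAddCommGroup X] [NormedSpace ℝ X]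

/-- Convexity for `EReal`-valued functions. -/
def ConvexER (g : X → EReal) : Prop :=
  ∀ x y : X, ∀ a b : ℝ, 0 ≤ a → 0 ≤ b → a + b = 1 →
    g (a • x + b • y) ≤ (a : EReal) * g x + (b : EReal) * g y

/-- Properness: not identically `+∞`, and nowhere `-∞` (so the function maps into `ℝ ∪ {+∞}`). -/
def ProperER (g : X → EReal) : Prop := (∃ x, g x ≠ ⊤) ∧ ∀ x, g x ≠ ⊥

/-- Fenchel conjugate of `g : X → EReal`, defined on the topological dual. -/
def fconj (g : X → EReal) : StrongDual ℝ X → EReal :=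
  fun p => ⨆ x : X, (p x : EReal) - g x

/-- Fenchel biconjugate of `g : X → EReal`, defined on the bidual. -/
def fbiconj (g : X → EReal) : StrongDual ℝ (StrongDual ℝ X) → EReal :=
  fun z => ⨆ p : StrongDual ℝ X, (z p : EReal) - fconj g p

/-- Closure with respect to the weak-* topology `σ(E*, E)` on a dual space. -/
def wstarClosure {E : Type*} [NormedAddCommGroup E] [NormedSpace ℝ E]
    (A : Set (StrongDual ℝ E)) : Set (StrongDual ℝ E) :=
  StrongDual.toWeakDual ⁻¹' closure (StrongDual.toWeakDual '' A)


/-! ### Real helpers -/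

lemma real_le_of_forall_pos {a b : ℝ} (h : ∀ ε : ℝ, 0 < ε → a ≤ b + ε) : a ≤ b := by
  by_contra hab
  push_neg at hab
  have := h ((a - b) / 2) (by linarith)
  linarith

lemma real_slope_nonpos {A B s : ℝ} (h : ∀ t : ℝ, 0 < t → A + t * s < B) : s ≤ 0 := by
  by_contra hs
  push_neg at hs
  have h1 := h 1 one_pos
  have ht : (0:ℝ) < (B - A) / s := div_pos (by linarith) hs
  have h2 := h _ ht
  rw [div_mul_cancel₀ _ (ne_of_gt hs)] at h2
  linarith

lemma real_slope_le {a b A d : ℝ} (h : ∀ t : ℝ, 0 < t → a + t * b ≤ A + t * d) : b ≤ d := by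
  by_contra hbd
  push_neg at hbd
  set t := max 1 ((A - a + 1) / (b - d)) with ht
  have htpos : (0:ℝ) < t := lt_of_lt_of_le one_pos (le_max_left _ _)
  have h2 := h t htpos
  have h3 : (A - a + 1) / (b - d) ≤ t := le_max_right _ _
  have h4 : A - a + 1 ≤ t * (b - d) := by
    rw [div_le_iff₀ (by linarith)] at h3
    linarith [h3]
  nlinarith

lemma real_limit_le {pw p0 u : ℝ} (h : ∀ θ : ℝ, 0 < θ → θ ≤ 1 → θ * p0 + (1 - θ) * pw < u) :
    pw ≤ u := by
  by_contra hpw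
  push_neg at hpw
  have hp0 : p0 < u := by have := h 1 one_pos le_rfl; linarith
  set θ := (pw - u) / (pw - p0) with hθ
  have hd : 0 < pw - p0 := by linarith
  have hθpos : 0 < θ := div_pos (by linarith) hd
  have hθle : θ ≤ 1 := by
    rw [hθ, div_le_one hd]; linarith
  have h2 := h θ hθpos hθle
  have h3 : θ * (pw - p0) = pw - u := div_mul_cancel₀ _ (ne_of_gt hd)
  nlinarith

lemma real_lim_of_slack {A B C : ℝ} (hC : 0 ≤ C) (h : ∀ ε : ℝ, 0 < ε → A < B + ε * C) :
    A ≤ B := by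
  apply real_le_of_forall_pos
  intro ε hε
  have h2 := h (ε / (C + 1)) (div_pos hε (by linarith))
  have h3 : ε / (C + 1) * C ≤ ε := by
    rw [div_mul_eq_mul_div, div_le_iff₀ (by linarith)]
    nlinarith
  linarith

lemma real_forall_pos2 {P Q : ℝ} (hQ : 0 ≤ Q) (h : ∀ ε : ℝ, 0 < ε → 0 < P + ε * Q) : 0 ≤ P := by
  by_contra hP
  push_neg at hP
  have hε : 0 < -P / (Q + 1) := div_pos (by linarith) (by linarith)
  have h2 := h _ hε
  have h3 : P + -P / (Q + 1) * Q = P / (Q + 1) := by field_simp; ring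
  rw [h3] at h2
  have := (div_pos_iff.1 h2)
  rcases this with ⟨h4, _⟩ | ⟨_, h5⟩ <;> linarith

/-! ### EReal helpers -/

lemma ereal_eq_coe_of {v : EReal} (h1 : v ≠ ⊥) (h2 : v ≠ ⊤) : v = ((v.toReal : ℝ) : EReal) :=
  (EReal.coe_toReal h2 h1).symm

lemma ereal_coe_sum {n : ℕ} (g : Fin n → ℝ) :
    ((∑ k, g k : ℝ) : EReal) = ∑ k, ((g k : ℝ) : EReal) :=
  map_sum (⟨⟨Real.toEReal, EReal.coe_zero⟩, EReal.coe_add⟩ : ℝ →+ EReal) g Finset.univ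

lemma ereal_sum_ne_bot {n : ℕ} {s : Finset (Fin n)} {g : Fin n → EReal}
    (h : ∀ k, g k ≠ ⊥) : ∑ k ∈ s, g k ≠ ⊥ := by
  classical
  induction s using Finset.induction with
  | empty => simp
  | insert _ _ hx ih =>
    rw [Finset.sum_insert hx]
    rw [Ne, EReal.add_eq_bot_iff]
    push_neg
    exact ⟨h _, ih⟩

lemma ereal_sum_eq_top {n : ℕ} {g : Fin n → EReal} (h : ∀ k, g k ≠ ⊥) {k₀ : Fin n}
    (hk : g k₀ = ⊤) : ∑ k, g k = ⊤ := by
  classical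
  rw [← Finset.add_sum_erase _ _ (Finset.mem_univ k₀), hk]
  exact EReal.top_add_of_ne_bot (ereal_sum_ne_bot h)

lemma ereal_coe_sub_top (a : ℝ) : (a : EReal) - ⊤ = ⊥ := by
  rw [sub_eq_add_neg, EReal.neg_top, EReal.add_bot]

lemma ereal_coe_sub_le {a : ℝ} {b c : EReal} (hc : c ≠ ⊥) (h : (a : EReal) - c ≤ b) :
    (a : EReal) - b ≤ c := by
  induction c with
  | bot => exact absurd rfl hc
  | coe c =>
    rw [← EReal.coe_sub] at h
    induction b with
    | bot => exact absurd (le_bot_iff.1 h) (EReal.coe_ne_bot _)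
    | coe b =>
      rw [EReal.coe_le_coe_iff] at h
      rw [← EReal.coe_sub, EReal.coe_le_coe_iff]
      linarith
    | top => rw [ereal_coe_sub_top]; exact bot_le
  | top => exact le_top

lemma ereal_le_of_sub_nonpos {a : ℝ} {c : EReal} (hc : c ≠ ⊥) (h : (a : EReal) - c ≤ 0) :
    (a : EReal) ≤ c := by
  induction c with
  | bot => exact absurd rfl hc
  | coe c =>
    rw [← EReal.coe_sub, ← EReal.coe_zero, EReal.coe_le_coe_iff] at h
    rw [EReal.coe_le_coe_iff]
    linarith
  | top => exact le_top

lemma ereal_add_coe_le_coe {v : EReal} {t c : ℝ} :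
    v + (t : EReal) ≤ (c : EReal) ↔ v ≤ ((c - t : ℝ) : EReal) := by
  induction v with
  | bot => simp [EReal.bot_add]
  | coe v =>
    rw [← EReal.coe_add, EReal.coe_le_coe_iff, EReal.coe_le_coe_iff]
    constructor <;> intro <;> linarith
  | top =>
    rw [EReal.top_add_coe]
    constructor
    · intro h; exact absurd (top_le_iff.1 h) (EReal.coe_ne_top _)
    · intro h; exact absurd (top_le_iff.1 h) (EReal.coe_ne_top _)

lemma ereal_mul_ne_bot {t : ℝ} (ht : 0 ≤ t) {w : EReal} (hw : w ≠ ⊥) : (t : EReal) * w ≠ ⊥ := by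
  induction w with
  | bot => exact absurd rfl hw
  | coe w => rw [← EReal.coe_mul]; exact EReal.coe_ne_bot _
  | top =>
    rcases eq_or_lt_of_le ht with h | h
    · rw [← h, EReal.coe_zero, zero_mul]; exact EReal.coe_ne_bot 0
    · rw [EReal.coe_mul_top_of_pos h]; exact top_ne_bot

lemma ereal_mul_add {a : ℝ} (ha : 0 ≤ a) {v w : EReal} (hv : v ≠ ⊥) (hw : w ≠ ⊥) :
    (a : EReal) * (v + w) = (a : EReal) * v + (a : EReal) * w := by
  rcases eq_or_lt_of_le ha with h | h
  · rw [← h]; simp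
  · induction v with
    | bot => exact absurd rfl hv
    | coe v =>
      induction w with
      | bot => exact absurd rfl hw
      | coe w =>
        rw [← EReal.coe_add, ← EReal.coe_mul, ← EReal.coe_mul, ← EReal.coe_mul, ← EReal.coe_add,
          mul_add]
      | top =>
        rw [EReal.coe_add_top, EReal.coe_mul_top_of_pos h, ← EReal.coe_mul, EReal.coe_add_top]
    | top =>
      rw [EReal.top_add_of_ne_bot hw, EReal.coe_mul_top_of_pos h,
        EReal.top_add_of_ne_bot (ereal_mul_ne_bot ha hw)]

/-! ### Convexity combination helpers -/

lemma ereal_combo_le {g : X → EReal} (hgc : ConvexER g) (hgb : ∀ x, g x ≠ ⊥)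
    {x y : X} {ux uy : ℝ} (hx : g x ≤ (ux : EReal)) (hy : g y ≤ (uy : EReal))
    {a b : ℝ} (ha : 0 ≤ a) (hb : 0 ≤ b) (hab : a + b = 1) :
    g (a • x + b • y) ≤ ((a * ux + b * uy : ℝ) : EReal) := by
  have hxt : g x ≠ ⊤ := fun h => by rw [h] at hx; exact absurd (le_antisymm hx le_top).symm (EReal.coe_ne_top _)
  have hyt : g y ≠ ⊤ := fun h => by rw [h] at hy; exact absurd (le_antisymm hy le_top).symm (EReal.coe_ne_top _)
  have hxc := ereal_eq_coe_of (hgb x) hxt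
  have hyc := ereal_eq_coe_of (hgb y) hyt
  set gx := (g x).toReal
  set gy := (g y).toReal
  have h1 : g (a • x + b • y) ≤ ((a * gx + b * gy : ℝ) : EReal) := by
    calc g (a • x + b • y) ≤ (a : EReal) * g x + (b : EReal) * g y := hgc x y a b ha hb hab
    _ = ((a * gx + b * gy : ℝ) : EReal) := by
        rw [hxc, hyc, ← EReal.coe_mul, ← EReal.coe_mul, ← EReal.coe_add]
  refine h1.trans (EReal.coe_le_coe_iff.2 ?_)
  have hx' : gx ≤ ux := EReal.coe_le_coe_iff.1 (hxc ▸ hx)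
  have hy' : gy ≤ uy := EReal.coe_le_coe_iff.1 (hyc ▸ hy)
  have := mul_le_mul_of_nonneg_left hx' ha
  have := mul_le_mul_of_nonneg_left hy' hb
  linarith

lemma ereal_combo_lt {g : X → EReal} (hgc : ConvexER g) (hgb : ∀ x, g x ≠ ⊥)
    {x y : X} {ux uy : ℝ} (hx : g x < (ux : EReal)) (hy : g y < (uy : EReal))
    {a b : ℝ} (ha : 0 ≤ a) (hb : 0 ≤ b) (hab : a + b = 1) :
    g (a • x + b • y) < ((a * ux + b * uy : ℝ) : EReal) := by
  have hxt : g x ≠ ⊤ := ne_top_of_lt hx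
  have hyt : g y ≠ ⊤ := ne_top_of_lt hy
  have hxc := ereal_eq_coe_of (hgb x) hxt
  have hyc := ereal_eq_coe_of (hgb y) hyt
  set gx := (g x).toReal
  set gy := (g y).toReal
  have h1 : g (a • x + b • y) ≤ ((a * gx + b * gy : ℝ) : EReal) := by
    calc g (a • x + b • y) ≤ (a : EReal) * g x + (b : EReal) * g y := hgc x y a b ha hb hab
    _ = ((a * gx + b * gy : ℝ) : EReal) := by
        rw [hxc, hyc, ← EReal.coe_mul, ← EReal.coe_mul, ← EReal.coe_add]
  refine lt_of_le_of_lt h1 (EReal.coe_lt_coe_iff.2 ?_)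
  have hx' : gx < ux := EReal.coe_lt_coe_iff.1 (hxc ▸ hx)
  have hy' : gy < uy := EReal.coe_lt_coe_iff.1 (hyc ▸ hy)
  rcases eq_or_lt_of_le ha with h | h
  · rw [← h] at hab ⊢
    have hb1 : b = 1 := by linarith
    rw [hb1]; simpa using hy'
  · have h2 : a * gx < a * ux := mul_lt_mul_of_pos_left hx' h
    have h3 : b * gy ≤ b * uy := mul_le_mul_of_nonneg_left hy'.le hb
    linarith

/-! ### fconj basics -/

lemma le_fconj (g : X → EReal) (p : StrongDual ℝ X) (x : X) :
    (p x : EReal) - g x ≤ fconj g p :=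
  le_iSup (fun x => (p x : EReal) - g x) x

lemma fconj_le (g : X → EReal) (p : StrongDual ℝ X) {d : EReal}
    (h : ∀ x, (p x : EReal) - g x ≤ d) : fconj g p ≤ d :=
  iSup_le h

lemma fconj_ne_bot {g : X → EReal} (hg : ProperER g) (p : StrongDual ℝ X) : fconj g p ≠ ⊥ := by
  obtain ⟨x, hx⟩ := hg.1
  intro hb
  have h1 := le_fconj g p x
  rw [hb, le_bot_iff] at h1
  rw [ereal_eq_coe_of (hg.2 x) hx, ← EReal.coe_sub] at h1
  exact EReal.coe_ne_bot _ h1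

/-! ### Core Fenchel duality via Hahn–Banach separation -/

lemma fenchel_core {F G : X → EReal} (hFb : ∀ x, F x ≠ ⊥) (hFc : ConvexER F)
    (hGb : ∀ x, G x ≠ ⊥) (hGc : ConvexER G) {x₁ : X}
    (hFx₁ : F x₁ ≠ ⊤) (hGx₁ : G x₁ ≠ ⊤) (hGcont : ContinuousAt G x₁) (c : ℝ)
    (hc : ∀ x, (c : EReal) ≤ F x + G x) :
    ∃ p : StrongDual ℝ X, fconj F (-p) + fconj G p ≤ ((-c : ℝ) : EReal) := by
  classical
  set A : Set (X × ℝ) := {w | G w.1 < (w.2 : EReal)} with hA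
  set B : Set (X × ℝ) := {w | F w.1 + (w.2 : EReal) ≤ (c : EReal)} with hB
  -- convexity of A
  have hAconv : Convex ℝ A := by
    intro w hw w' hw' a b ha hb hab
    have h1 : G (a • w.1 + b • w'.1) < ((a * w.2 + b * w'.2 : ℝ) : EReal) :=
      ereal_combo_lt hGc hGb hw hw' ha hb hab
    show G (a • w + b • w').1 < (((a • w + b • w').2 : ℝ) : EReal)
    have h2 : (a • w + b • w').1 = a • w.1 + b • w'.1 := rfl
    have h3 : (a • w + b • w').2 = a * w.2 + b * w'.2 := rfl
    rw [h2, h3]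
    exact h1
  -- convexity of B
  have hBconv : Convex ℝ B := by
    intro w hw w' hw' a b ha hb hab
    have hw1 : F w.1 ≤ ((c - w.2 : ℝ) : EReal) := ereal_add_coe_le_coe.1 hw
    have hw1' : F w'.1 ≤ ((c - w'.2 : ℝ) : EReal) := ereal_add_coe_le_coe.1 hw'
    have h1 : F (a • w.1 + b • w'.1) ≤ ((a * (c - w.2) + b * (c - w'.2) : ℝ) : EReal) :=
      ereal_combo_le hFc hFb hw1 hw1' ha hb hab
    show F (a • w + b • w').1 + (((a • w + b • w').2 : ℝ) : EReal) ≤ (c : EReal)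
    have h3 : (a • w + b • w').2 = a * w.2 + b * w'.2 := rfl
    rw [show (a • w + b • w').1 = a • w.1 + b • w'.1 from rfl, h3, ereal_add_coe_le_coe]
    refine h1.trans (EReal.coe_le_coe_iff.2 ?_)
    have hcc : a * c + b * c = c := by
      calc a * c + b * c = (a + b) * c := by ring
      _ = c := by rw [hab, one_mul]
    linarith
  -- disjointness
  have hdisj : ∀ w, w ∈ A → w ∉ B := by
    intro w hwA hwB
    have hG1 : G w.1 ≠ ⊤ := ne_top_of_lt hwA
    have hgc := ereal_eq_coe_of (hGb w.1) hG1
    have hF1 : F w.1 ≤ ((c - w.2 : ℝ) : EReal) := ereal_add_coe_le_coe.1 hwB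
    have hFt : F w.1 ≠ ⊤ := fun h => by
      rw [h] at hF1; exact absurd (le_antisymm hF1 le_top).symm (EReal.coe_ne_top _)
    have hfc := ereal_eq_coe_of (hFb w.1) hFt
    have hcw := hc w.1
    rw [hfc, hgc, ← EReal.coe_add, EReal.coe_le_coe_iff] at hcw
    rw [hfc, EReal.coe_le_coe_iff] at hF1
    have hwA' : G w.1 < (w.2 : EReal) := hwA
    rw [hgc, EReal.coe_lt_coe_iff] at hwA'
    linarith
  -- a nonempty open box inside A
  have hGx₁c := ereal_eq_coe_of (hGb x₁) hGx₁
  set M : ℝ := (G x₁).toReal + 1 with hM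
  have hGx₁M : G x₁ ∈ {v : EReal | v < ((M : ℝ) : EReal)} := by
    rw [mem_setOf_eq, hGx₁c, EReal.coe_lt_coe_iff]; linarith
  have hpre : G ⁻¹' {v : EReal | v < ((M : ℝ) : EReal)} ∈ 𝓝 x₁ := by
    have : IsOpen {v : EReal | v < ((M : ℝ) : EReal)} := isOpen_Iio
    exact hGcont.preimage_mem_nhds (this.mem_nhds hGx₁M)
  obtain ⟨r, hr, hball⟩ := Metric.mem_nhds_iff.1 hpre
  set U : Set (X × ℝ) := Metric.ball x₁ r ×ˢ Set.Ioi M with hU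
  have hUopen : IsOpen U := Metric.isOpen_ball.prod isOpen_Ioi
  have hUA : U ⊆ A := by
    rintro ⟨y, t⟩ ⟨hy, ht⟩
    have h1 : G y < ((M : ℝ) : EReal) := hball hy
    exact h1.trans (EReal.coe_lt_coe_iff.2 ht)
  have hw₀int : ((x₁, M + 1) : X × ℝ) ∈ interior A := by
    apply interior_maximal hUA hUopen
    exact ⟨Metric.mem_ball_self hr, Set.mem_Ioi.2 (lt_add_one M)⟩
  -- B is nonempty
  set fr : ℝ := (F x₁).toReal with hfrdef
  have hFx₁c : F x₁ = (fr : EReal) := ereal_eq_coe_of (hFb x₁) hFx₁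
  have hwB : ((x₁, c - fr) : X × ℝ) ∈ B := by
    show F x₁ + ((c - fr : ℝ) : EReal) ≤ (c : EReal)
    rw [hFx₁c, ← EReal.coe_add, EReal.coe_le_coe_iff]
    linarith
  -- separation
  obtain ⟨φ, u, hφA, hφB⟩ :=
    geometric_hahn_banach_open (hAconv.interior) isOpen_interior hBconv
      (Set.disjoint_left.2 fun w hw hwB => hdisj w (interior_subset hw) hwB)
  -- extend the strict inequality to all of A
  have hφA' : ∀ w ∈ A, φ w ≤ u := by
    intro w hw
    apply real_limit_le (p0 := φ (x₁, M + 1))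
    intro θ h0 h1
    have hmem := hAconv.combo_interior_self_mem_interior (a := θ) (b := 1 - θ)
      hw₀int hw h0 (by linarith) (by ring)
    have := hφA _ hmem
    rwa [map_add, map_smul, map_smul, smul_eq_mul, smul_eq_mul] at this
  -- decompose φ
  set pt : StrongDual ℝ X := φ.comp (ContinuousLinearMap.inl ℝ X ℝ) with hpt
  set sc : ℝ := φ (0, 1) with hsc
  have hdecomp : ∀ w : X × ℝ, φ w = pt w.1 + w.2 * sc := by
    intro w
    have h1 : φ w = φ (w.1, 0) + w.2 * φ (0, 1) := by
      conv_lhs => rw [show w = (w.1, 0) + w.2 • ((0 : X), (1 : ℝ)) by ext <;> simp]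
      rw [map_add, map_smul, smul_eq_mul]
    exact h1
  -- the slope sc is negative
  have hsc_nonpos : sc ≤ 0 := by
    apply real_slope_nonpos (A := pt x₁ + (M + 1) * sc) (B := u)
    intro t ht
    have hmem : ((x₁, M + 1 + t) : X × ℝ) ∈ interior A := by
      apply interior_maximal hUA hUopen
      exact ⟨Metric.mem_ball_self hr, Set.mem_Ioi.2 (show M < M + 1 + t by linarith)⟩
    have := hφA _ hmem
    rw [hdecomp] at this
    simp only at this
    nlinarith
  have hsc_ne : sc ≠ 0 := by
    intro h0
    have h1 : φ (x₁, M + 1) < u := hφA _ hw₀int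
    have h2 : u ≤ φ (x₁, c - fr) := hφB _ hwB
    rw [hdecomp, h0] at h1 h2
    simp only [mul_zero, add_zero] at h1 h2
    linarith
  have hsc_neg : sc < 0 := lt_of_le_of_ne hsc_nonpos hsc_ne
  set lam : ℝ := -sc with hlam
  have hlam_pos : 0 < lam := by simp [hlam]; linarith
  set p : StrongDual ℝ X := lam⁻¹ • pt with hp
  have hp_apply : ∀ x, p x = lam⁻¹ * pt x := fun x => rfl
  -- conjugate bound for G
  have hGineq : fconj G p ≤ ((u / lam : ℝ) : EReal) := by
    apply fconj_le
    intro x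
    rcases eq_or_ne (G x) ⊤ with hgx | hgx
    · rw [hgx, ereal_coe_sub_top]; exact bot_le
    · have hgxc := ereal_eq_coe_of (hGb x) hgx
      set g : ℝ := (G x).toReal
      have key : pt x + g * sc ≤ u := by
        apply real_le_of_forall_pos
        intro ε hε
        have hmem : ((x, g + ε / lam) : X × ℝ) ∈ A := by
          show G x < ((g + ε / lam : ℝ) : EReal)
          rw [hgxc, EReal.coe_lt_coe_iff]
          have : 0 < ε / lam := div_pos hε hlam_pos
          linarith
        have := hφA' _ hmem
        rw [hdecomp] at this
        simp only at this
        have hel : (g + ε / lam) * sc = g * sc - (ε / lam) * lam := by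
          rw [hlam]; ring
        rw [hel, div_mul_cancel₀ _ (ne_of_gt hlam_pos)] at this
        linarith
      rw [hgxc, ← EReal.coe_sub, EReal.coe_le_coe_iff, hp_apply]
      rw [div_eq_mul_inv]
      have h2 : (pt x - lam * g) * lam⁻¹ ≤ u * lam⁻¹ := by
        apply mul_le_mul_of_nonneg_right _ (inv_nonneg.2 hlam_pos.le)
        rw [hlam]; linarith
      calc lam⁻¹ * pt x - g = (pt x - lam * g) * lam⁻¹ := by
            field_simp
          _ ≤ u * lam⁻¹ := h2
  -- conjugate bound for F
  have hFineq : fconj F (-p) ≤ ((-(u / lam) - c : ℝ) : EReal) := by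
    apply fconj_le
    intro x
    rcases eq_or_ne (F x) ⊤ with hfx | hfx
    · rw [hfx, ereal_coe_sub_top]; exact bot_le
    · have hfxc := ereal_eq_coe_of (hFb x) hfx
      set a : ℝ := (F x).toReal
      have hmem : ((x, c - a) : X × ℝ) ∈ B := by
        show F x + ((c - a : ℝ) : EReal) ≤ (c : EReal)
        rw [hfxc, ← EReal.coe_add, EReal.coe_le_coe_iff]
        linarith
      have h1 := hφB _ hmem
      rw [hdecomp] at h1
      simp only at h1
      have h2 : ((-p) x : ℝ) = -(lam⁻¹ * pt x) := by
        rw [ContinuousLinearMap.neg_apply, hp_apply]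
      rw [hfxc, ← EReal.coe_sub, EReal.coe_le_coe_iff, h2]
      -- from u ≤ pt x + (c - a) * sc, i.e. pt x ≥ u + lam * (c - a)
      have h3 : u + lam * (c - a) ≤ pt x := by
        rw [hlam]; nlinarith
      have h4 : (u + lam * (c - a)) * lam⁻¹ ≤ pt x * lam⁻¹ :=
        mul_le_mul_of_nonneg_right h3 (inv_nonneg.2 hlam_pos.le)
      have h5 : (u + lam * (c - a)) * lam⁻¹ = u * lam⁻¹ + (c - a) := by
        field_simp
      rw [h5] at h4
      rw [div_eq_mul_inv]
      linarith
  refine ⟨p, ?_⟩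
  calc fconj F (-p) + fconj G p ≤ ((-(u / lam) - c : ℝ) : EReal) + ((u / lam : ℝ) : EReal) :=
        add_le_add hFineq hGineq
    _ = ((-c : ℝ) : EReal) := by rw [← EReal.coe_add]; congr 1; ring

/-! ### Sums of convex functions -/

lemma convexER_add {F G : X → EReal} (hF : ConvexER F) (hG : ConvexER G)
    (hFb : ∀ x, F x ≠ ⊥) (hGb : ∀ x, G x ≠ ⊥) : ConvexER (fun x => F x + G x) := by
  intro x y a b ha hb hab
  have h1 := hF x y a b ha hb hab
  have h2 := hG x y a b ha hb hab
  calc F (a • x + b • y) + G (a • x + b • y)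
      ≤ ((a : EReal) * F x + (b : EReal) * F y) + ((a : EReal) * G x + (b : EReal) * G y) :=
        add_le_add h1 h2
    _ = (a : EReal) * (F x + G x) + (b : EReal) * (F y + G y) := by
        rw [ereal_mul_add ha (hFb x) (hGb x), ereal_mul_add hb (hFb y) (hGb y)]
        exact add_add_add_comm _ _ _ _

lemma convexER_linear (q : StrongDual ℝ X) : ConvexER (fun x => ((q x : ℝ) : EReal)) := by
  intro x y a b ha hb hab
  apply le_of_eq
  change ((q (a • x + b • y) : ℝ) : EReal) =
    (a : EReal) * ((q x : ℝ) : EReal) + (b : EReal) * ((q y : ℝ) : EReal)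
  rw [map_add, map_smul, map_smul, smul_eq_mul, smul_eq_mul, EReal.coe_add, EReal.coe_mul,
    EReal.coe_mul]

lemma fconj_add_linear {F : X → EReal} (hFb : ∀ x, F x ≠ ⊥) (q r : StrongDual ℝ X) :
    fconj (fun x => F x + ((-(q x) : ℝ) : EReal)) r = fconj F (r + q) := by
  unfold fconj
  refine iSup_congr fun x => ?_
  show (r x : EReal) - (F x + ((-(q x) : ℝ) : EReal)) = ((r + q) x : EReal) - F x
  rcases eq_or_ne (F x) ⊤ with h | h
  · rw [h, EReal.top_add_coe, ereal_coe_sub_top, ereal_coe_sub_top]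
  · have hc := ereal_eq_coe_of (hFb x) h
    rw [hc, ← EReal.coe_add, ← EReal.coe_sub, ← EReal.coe_sub, EReal.coe_eq_coe_iff,
      ContinuousLinearMap.add_apply]
    ring

/-! ### Iterated Fenchel duality -/

lemma fenchel_sum : ∀ (n : ℕ) (F : X → EReal) (G : Fin n → X → EReal),
    (∀ x, F x ≠ ⊥) → ConvexER F →
    (∀ k x, G k x ≠ ⊥) → (∀ k, ConvexER (G k)) →
    ∀ x₁ : X, F x₁ ≠ ⊤ → (∀ k, G k x₁ ≠ ⊤) →
    (∀ k, ContinuousAt (G k) x₁) →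
    ∀ c : ℝ, (∀ x, (c : EReal) ≤ F x + ∑ k, G k x) →
    ∃ p : Fin n → StrongDual ℝ X,
      fconj F (-(∑ k, p k)) + ∑ k, fconj (G k) (p k) ≤ ((-c : ℝ) : EReal) := by
  intro n
  induction n with
  | zero =>
    intro F G hFb hFc hGb hGc x₁ hFx₁ hGx₁ hGcont c hc
    refine ⟨fun _ => 0, ?_⟩
    simp only [Finset.univ_eq_empty, Finset.sum_empty, neg_zero, add_zero]
    apply fconj_le
    intro x
    have hcx := hc x
    rw [Finset.univ_eq_empty, Finset.sum_empty, add_zero] at hcx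
    have h0 : ((0 : StrongDual ℝ X) x : ℝ) = 0 := rfl
    rw [h0]
    have hbx := hFb x
    generalize hFx : F x = v at hcx hbx ⊢
    induction v with
    | bot => exact absurd rfl hbx
    | coe t =>
      rw [← EReal.coe_sub, EReal.coe_le_coe_iff]
      rw [EReal.coe_le_coe_iff] at hcx
      linarith
    | top => rw [ereal_coe_sub_top]; exact bot_le
  | succ n ih =>
    intro F G hFb hFc hGb hGc x₁ hFx₁ hGx₁ hGcont c hc
    set L : X → EReal := G (Fin.last n) with hL
    have hLb : ∀ x, L x ≠ ⊥ := fun x => hGb _ x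
    have hLc : ConvexER L := hGc _
    have hLx₁ : L x₁ ≠ ⊤ := hGx₁ _
    have hLcont : ContinuousAt L x₁ := hGcont _
    set F' : X → EReal := fun x => F x + L x with hF'
    have hF'b : ∀ x, F' x ≠ ⊥ := fun x => by
      rw [show F' x = F x + L x from rfl, Ne, EReal.add_eq_bot_iff]
      push_neg
      exact ⟨hFb x, hLb x⟩
    have hF'c : ConvexER F' := convexER_add hFc hLc hFb hLb
    have hF'x₁ : F' x₁ ≠ ⊤ := by
      show F x₁ + L x₁ ≠ ⊤
      rw [ereal_eq_coe_of (hFb x₁) hFx₁, ereal_eq_coe_of (hLb x₁) hLx₁, ← EReal.coe_add]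
      exact EReal.coe_ne_top _
    have hc' : ∀ x, (c : EReal) ≤ F' x + ∑ k : Fin n, G k.castSucc x := by
      intro x
      have h1 := hc x
      rw [Fin.sum_univ_castSucc] at h1
      calc (c : EReal) ≤ F x + (∑ k : Fin n, G k.castSucc x + L x) := h1
        _ = F' x + ∑ k : Fin n, G k.castSucc x := by
            show F x + (∑ k : Fin n, G k.castSucc x + L x) = (F x + L x) + _
            abel
    obtain ⟨p', hp'⟩ := ih F' (fun k => G k.castSucc) hF'b hF'c (fun k x => hGb _ x)
      (fun k => hGc _) x₁ hF'x₁ (fun k => hGx₁ _) (fun k => hGcont _) c hc'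
    set q : StrongDual ℝ X := -(∑ k, p' k) with hq
    set T : EReal := ∑ k : Fin n, fconj (G k.castSucc) (p' k) with hT
    have hTb : T ≠ ⊥ :=
      ereal_sum_ne_bot fun k => fconj_ne_bot ⟨⟨x₁, hGx₁ _⟩, fun x => hGb _ x⟩ _
    have hβb : fconj F' q ≠ ⊥ := fconj_ne_bot ⟨⟨x₁, hF'x₁⟩, hF'b⟩ _
    have hβt : fconj F' q ≠ ⊤ := by
      intro h
      rw [h, EReal.top_add_of_ne_bot hTb] at hp'
      exact EReal.coe_ne_top _ (top_le_iff.1 hp')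
    set βr : ℝ := (fconj F' q).toReal with hβrdef
    have hβ : fconj F' q = (βr : EReal) := ereal_eq_coe_of hβb hβt
    set F'' : X → EReal := fun x => F x + ((-(q x) : ℝ) : EReal) with hF''
    have hF''b : ∀ x, F'' x ≠ ⊥ := fun x => by
      rw [show F'' x = F x + ((-(q x) : ℝ) : EReal) from rfl, Ne, EReal.add_eq_bot_iff]
      push_neg
      exact ⟨hFb x, EReal.coe_ne_bot _⟩
    have hF''c : ConvexER F'' := by
      have h := convexER_add hFc (convexER_linear (-q)) hFb (fun x => EReal.coe_ne_bot _)
      exact h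
    have hF''x₁ : F'' x₁ ≠ ⊤ := by
      show F x₁ + ((-(q x₁) : ℝ) : EReal) ≠ ⊤
      rw [ereal_eq_coe_of (hFb x₁) hFx₁, ← EReal.coe_add]
      exact EReal.coe_ne_top _
    have hcc : ∀ x, ((-βr : ℝ) : EReal) ≤ F'' x + L x := by
      intro x
      have h1 : (q x : EReal) - F' x ≤ (βr : EReal) := hβ ▸ le_fconj F' q x
      rcases eq_or_ne (F x) ⊤ with hfx | hfx
      · have h2 : F'' x = ⊤ := by
          show F x + ((-(q x) : ℝ) : EReal) = ⊤
          rw [hfx]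
          exact EReal.top_add_coe _
        rw [h2, EReal.top_add_of_ne_bot (hLb x)]
        exact le_top
      · rcases eq_or_ne (L x) ⊤ with hlx | hlx
        · rw [hlx, EReal.add_top_of_ne_bot (hF''b x)]
          exact le_top
        · obtain ⟨fx, hfc⟩ : ∃ t : ℝ, F x = (t : EReal) := ⟨_, ereal_eq_coe_of (hFb x) hfx⟩
          obtain ⟨lx, hlc⟩ : ∃ t : ℝ, L x = (t : EReal) := ⟨_, ereal_eq_coe_of (hLb x) hlx⟩
          rw [show F' x = F x + L x from rfl, hfc, hlc, ← EReal.coe_add, ← EReal.coe_sub,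
            EReal.coe_le_coe_iff] at h1
          have h3 : F'' x + L x = ((fx + -(q x) + lx : ℝ) : EReal) := by
            show F x + ((-(q x) : ℝ) : EReal) + L x = _
            rw [hfc, hlc, ← EReal.coe_add, ← EReal.coe_add]
          rw [h3, EReal.coe_le_coe_iff]
          linarith
    obtain ⟨plast, hplast⟩ := fenchel_core hF''b hF''c hLb hLc hF''x₁ hLx₁
      hLcont (-βr) hcc
    rw [neg_neg] at hplast
    have hkey : fconj F (q - plast) + fconj L plast ≤ fconj F' q := by
      rw [hβ]
      have h4 : fconj F (q - plast) = fconj F'' (-plast) := by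
        rw [show F'' = fun x => F x + ((-(q x) : ℝ) : EReal) from rfl,
          fconj_add_linear hFb q (-plast), neg_add_eq_sub]
      rw [h4]
      exact hplast
    refine ⟨Fin.snoc p' plast, ?_⟩
    have hsum : (∑ k : Fin (n + 1), (Fin.snoc p' plast : Fin (n + 1) → StrongDual ℝ X) k)
        = (∑ k : Fin n, p' k) + plast := by
      rw [Fin.sum_univ_castSucc]
      simp [Fin.snoc_castSucc, Fin.snoc_last]
    have hsumf : (∑ k : Fin (n + 1), fconj (G k) ((Fin.snoc p' plast : Fin (n + 1) → StrongDual ℝ X) k))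
        = T + fconj L plast := by
      rw [Fin.sum_univ_castSucc]
      simp only [Fin.snoc_castSucc, Fin.snoc_last]
      rfl
    rw [hsum, hsumf]
    have hneg : -((∑ k : Fin n, p' k) + plast) = q - plast := by
      rw [hq, neg_add, sub_eq_add_neg]
    rw [hneg]
    calc fconj F (q - plast) + (T + fconj L plast)
        = (fconj F (q - plast) + fconj L plast) + T := by abel
      _ ≤ fconj F' q + T := add_le_add_left hkey T
      _ ≤ ((-c : ℝ) : EReal) := hp'

/-! ### smulInf lemmas -/

lemma smulInf_coe {a : ℝ} {v : EReal} (hvt : v ≠ ⊤) (hvb : v ≠ ⊥) :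
    smulInf a v = ((a * v.toReal : ℝ) : EReal) := by
  rw [smulInf, if_neg hvt, EReal.coe_mul, EReal.coe_toReal hvt hvb]

lemma smulInf_ne_bot {a : ℝ} {v : EReal} (hv : v ≠ ⊥) : smulInf a v ≠ ⊥ := by
  rcases eq_or_ne v ⊤ with h | h
  · rw [smulInf, if_pos h]; exact top_ne_bot
  · rw [smulInf_coe h hv]; exact EReal.coe_ne_bot _

lemma smulInf_top (a : ℝ) : smulInf a ⊤ = ⊤ := by rw [smulInf, if_pos rfl]

lemma ereal_lt_add_pos {v : EReal} (hb : v ≠ ⊥) (ht : v ≠ ⊤) {ε : ℝ} (hε : 0 < ε) :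
    v < ((v.toReal + ε : ℝ) : EReal) := by
  conv_lhs => rw [ereal_eq_coe_of hb ht]
  exact EReal.coe_lt_coe_iff.2 (by linarith)

/-! ### Lagrangian duality via finite-dimensional separation -/

lemma lagrange {m : ℕ} {f₀ : X → EReal} {f : Fin m → X → EReal}
    (hf₀b : ∀ x, f₀ x ≠ ⊥) (hf₀c : ConvexER f₀)
    (hfb : ∀ k x, f k x ≠ ⊥) (hfc : ∀ k, ConvexER (f k))
    {x₀ : X} (hx₀ : f₀ x₀ ≠ ⊤) (hsl : ∀ k, f k x₀ < 0)
    {c : ℝ} (hcv : (c : EReal) < ⨅ x ∈ {x : X | ∀ k, f k x ≤ 0}, f₀ x) :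
    ∃ lam : Fin m → ℝ, (∀ k, 0 ≤ lam k) ∧
      ∀ x, (c : EReal) ≤ f₀ x + ∑ k, smulInf (lam k) (f k x) := by
  classical
  set D : Set ((Fin m → ℝ) × ℝ) :=
    {w | ∃ x, (∀ k, f k x < ((w.1 k : ℝ) : EReal)) ∧ f₀ x < ((w.2 : ℝ) : EReal)} with hD
  -- D is open
  have hDopen : IsOpen D := by
    have : D = ⋃ x : X,
        ((⋂ k, {w : (Fin m → ℝ) × ℝ | f k x < ((w.1 k : ℝ) : EReal)}) ∩
          {w : (Fin m → ℝ) × ℝ | f₀ x < ((w.2 : ℝ) : EReal)}) := by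
      ext w
      simp only [hD, mem_setOf_eq, mem_iUnion, mem_inter_iff, mem_iInter]
    rw [this]
    apply isOpen_iUnion
    intro x
    apply IsOpen.inter
    · apply isOpen_iInter_of_finite
      intro k
      have hcont : Continuous fun w : (Fin m → ℝ) × ℝ => ((w.1 k : ℝ) : EReal) :=
        continuous_coe_real_ereal.comp ((continuous_apply k).comp continuous_fst)
      exact (isOpen_Ioi (a := f k x)).preimage hcont
    · have hcont : Continuous fun w : (Fin m → ℝ) × ℝ => ((w.2 : ℝ) : EReal) :=
        continuous_coe_real_ereal.comp continuous_snd
      exact (isOpen_Ioi (a := f₀ x)).preimage hcont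
  -- D is convex
  have hDconv : Convex ℝ D := by
    rintro w ⟨x, hx1, hx2⟩ w' ⟨x', hx1', hx2'⟩ a b ha hb hab
    refine ⟨a • x + b • x', fun k => ?_, ?_⟩
    · have h1 := ereal_combo_lt (hfc k) (hfb k) (hx1 k) (hx1' k) ha hb hab
      exact h1
    · have h2 := ereal_combo_lt hf₀c hf₀b hx2 hx2' ha hb hab
      exact h2
  -- the reference point of D
  set w₀ : (Fin m → ℝ) × ℝ := (fun k => (f k x₀).toReal + 1, (f₀ x₀).toReal + 1) with hw₀
  have hw₀D : w₀ ∈ D := by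
    refine ⟨x₀, fun k => ?_, ?_⟩
    · have h1 := ereal_eq_coe_of (hfb k x₀) (ne_top_of_lt (hsl k))
      rw [h1, EReal.coe_lt_coe_iff]
      show (f k x₀).toReal < (f k x₀).toReal + 1
      linarith
    · have h1 := ereal_eq_coe_of (hf₀b x₀) hx₀
      rw [h1, EReal.coe_lt_coe_iff]
      show (f₀ x₀).toReal < (f₀ x₀).toReal + 1
      linarith
  -- the point (0, c) is not in D
  have hnotin : ((0, c) : (Fin m → ℝ) × ℝ) ∉ D := by
    rintro ⟨x, hx1, hx2⟩
    have hfeas : x ∈ {x : X | ∀ k, f k x ≤ 0} := fun k => by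
      have := hx1 k
      exact le_of_lt (by exact_mod_cast this)
    have h1 : (⨅ x ∈ {x : X | ∀ k, f k x ≤ 0}, f₀ x) ≤ f₀ x := iInf₂_le x hfeas
    have h2 : f₀ x < (c : EReal) := hx2
    exact absurd (hcv.trans_le (h1.trans h2.le)) (lt_irrefl _)
  -- separation
  obtain ⟨φ, hφ⟩ := geometric_hahn_banach_open_point hDconv hDopen hnotin
  -- upward monotonicity of D
  have hup : ∀ w ∈ D, ∀ v : (Fin m → ℝ) × ℝ,
      (∀ k, w.1 k ≤ v.1 k) → w.2 ≤ v.2 → v ∈ D := by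
    rintro w ⟨x, hx1, hx2⟩ v h1 h2
    exact ⟨x, fun k => (hx1 k).trans_le (EReal.coe_le_coe_iff.2 (h1 k)),
      hx2.trans_le (EReal.coe_le_coe_iff.2 h2)⟩
  -- coefficients
  set ek : Fin m → (Fin m → ℝ) × ℝ := fun k => (Pi.single k 1, 0) with hek
  set e0 : (Fin m → ℝ) × ℝ := (0, 1) with he0
  have hek_nonpos : ∀ k, φ (ek k) ≤ 0 := by
    intro k
    apply real_slope_nonpos (A := φ w₀) (B := φ (0, c))
    intro t ht
    have hmem : w₀ + t • ek k ∈ D := by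
      apply hup w₀ hw₀D
      · intro j
        show w₀.1 j ≤ (w₀ + t • ek k).1 j
        have h4 : (w₀ + t • ek k).1 j = w₀.1 j + t * (Pi.single k (1:ℝ) : Fin m → ℝ) j := rfl
        rw [h4]
        have h5 : (0:ℝ) ≤ t * (Pi.single k (1:ℝ) : Fin m → ℝ) j := by
          apply mul_nonneg ht.le
          rcases eq_or_ne j k with h | h
          · rw [h, Pi.single_eq_same]; norm_num
          · rw [Pi.single_eq_of_ne h]
        linarith
      · show w₀.2 ≤ (w₀ + t • ek k).2
        have h4 : (w₀ + t • ek k).2 = w₀.2 + t * 0 := rfl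
        rw [h4]
        linarith
    have := hφ _ hmem
    rw [map_add, map_smul, smul_eq_mul] at this
    linarith [this]
  have he0_nonpos : φ e0 ≤ 0 := by
    apply real_slope_nonpos (A := φ w₀) (B := φ (0, c))
    intro t ht
    have hmem : w₀ + t • e0 ∈ D := by
      apply hup w₀ hw₀D
      · intro j
        show w₀.1 j ≤ (w₀ + t • e0).1 j
        have h4 : (w₀ + t • e0).1 j = w₀.1 j + t * 0 := rfl
        rw [h4]
        linarith
      · show w₀.2 ≤ (w₀ + t • e0).2
        have h4 : (w₀ + t • e0).2 = w₀.2 + t * 1 := rfl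
        rw [h4]
        linarith
    have := hφ _ hmem
    rw [map_add, map_smul, smul_eq_mul] at this
    linarith [this]
  set μ : Fin m → ℝ := fun k => -φ (ek k) with hμ
  set μ0 : ℝ := -φ e0 with hμ0
  have hμnn : ∀ k, 0 ≤ μ k := fun k => by
    simp only [hμ]; linarith [hek_nonpos k]
  have hμ0nn : 0 ≤ μ0 := by simp only [hμ0]; linarith [he0_nonpos]
  -- decomposition of φ
  have hdecomp : ∀ w : (Fin m → ℝ) × ℝ, φ w = -(∑ k, w.1 k * μ k) - w.2 * μ0 := by
    intro w
    have h2 : w = (∑ k, w.1 k • ek k) + w.2 • e0 := by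
      have hfst : (∑ k, w.1 k • ek k).1 = w.1 := by
        rw [Prod.fst_sum]
        have h3 : ∀ k : Fin m, (w.1 k • ek k).1 = Pi.single k (w.1 k) := by
          intro k
          show w.1 k • (Pi.single k (1:ℝ) : Fin m → ℝ) = Pi.single k (w.1 k)
          rw [← Pi.single_smul, smul_eq_mul, mul_one]
        rw [Finset.sum_congr rfl (fun k _ => h3 k), Finset.univ_sum_single]
      have hsnd : (∑ k, w.1 k • ek k).2 = 0 := by
        rw [Prod.snd_sum]
        apply Finset.sum_eq_zero
        intro k _
        show w.1 k • (0:ℝ) = 0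
        simp
      rw [Prod.ext_iff]
      constructor
      · rw [Prod.fst_add, hfst]
        show w.1 = w.1 + w.2 • (0 : Fin m → ℝ)
        simp
      · rw [Prod.snd_add, hsnd]
        show w.2 = 0 + w.2 • (1:ℝ)
        simp
    have h1 : φ w = ∑ k, w.1 k * φ (ek k) + w.2 * φ e0 := by
      conv_lhs => rw [h2]
      rw [map_add, map_sum, map_smul, smul_eq_mul]
      congr 1
      apply Finset.sum_congr rfl
      intro k _
      rw [map_smul, smul_eq_mul]
    rw [h1]
    have h5 : ∀ k : Fin m, φ (ek k) = -μ k := fun k => by simp [hμ]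
    have h6 : φ e0 = -μ0 := by simp [hμ0]
    rw [Finset.sum_congr rfl (fun k _ => by rw [h5 k]), h6]
    have h7 : ∑ k, w.1 k * -μ k = -∑ k, w.1 k * μ k := by
      rw [← Finset.sum_neg_distrib]
      apply Finset.sum_congr rfl
      intro k _
      ring
    rw [h7]
    ring
  -- μ0 is positive
  have hμ0pos : 0 < μ0 := by
    rcases eq_or_lt_of_le hμ0nn with h0 | h0
    · exfalso
      by_cases hall : ∀ k, μ k = 0
      · have h1 := hφ _ hw₀D
        rw [hdecomp w₀, hdecomp ((0 : Fin m → ℝ), c)] at h1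
        have hz1 : ∑ k, w₀.1 k * μ k = 0 :=
          Finset.sum_eq_zero fun k _ => by rw [hall k, mul_zero]
        have hz2 : ∑ k, ((0 : Fin m → ℝ), c).1 k * μ k = 0 :=
          Finset.sum_eq_zero fun k _ => by rw [hall k, mul_zero]
        rw [hz1, hz2, ← h0] at h1
        norm_num at h1
      · push_neg at hall
        obtain ⟨j, hj⟩ := hall
        have hμj : 0 < μ j := lt_of_le_of_ne (hμnn j) (Ne.symm hj)
        have htk : ∀ k, (f k x₀).toReal < 0 := by
          intro k
          have h1 := hsl k
          rw [ereal_eq_coe_of (hfb k x₀) (ne_top_of_lt (hsl k))] at h1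
          exact_mod_cast h1
        have hsum_nonneg : 0 ≤ ∑ k, (f k x₀).toReal * μ k := by
          apply real_forall_pos2 (Q := ∑ k, μ k) (Finset.sum_nonneg fun k _ => hμnn k)
          intro ε hε
          have hwεD : ((fun k => (f k x₀).toReal + ε, (f₀ x₀).toReal + 1) :
              (Fin m → ℝ) × ℝ) ∈ D := by
            refine ⟨x₀, fun k => ?_, ?_⟩
            · exact ereal_lt_add_pos (hfb k x₀) (ne_top_of_lt (hsl k)) hε
            · exact ereal_lt_add_pos (hf₀b x₀) hx₀ one_pos
          have h1 := hφ _ hwεD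
          rw [hdecomp, hdecomp ((0 : Fin m → ℝ), c)] at h1
          have hz2 : ∑ k, ((0 : Fin m → ℝ), c).1 k * μ k = 0 := by
            apply Finset.sum_eq_zero
            intro k _
            show (0:ℝ) * μ k = 0
            ring
          have hexp : ∑ k, ((f k x₀).toReal + ε) * μ k
              = ∑ k, (f k x₀).toReal * μ k + ε * ∑ k, μ k := by
            rw [Finset.mul_sum, ← Finset.sum_add_distrib]
            apply Finset.sum_congr rfl
            intro k _
            ring
          have h2 : ∑ k, ((fun k => (f k x₀).toReal + ε, (f₀ x₀).toReal + 1) :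
              (Fin m → ℝ) × ℝ).1 k * μ k = ∑ k, ((f k x₀).toReal + ε) * μ k := rfl
          rw [hz2, h2, hexp, ← h0] at h1
          have h3 : (((fun k => (f k x₀).toReal + ε, (f₀ x₀).toReal + 1) :
              (Fin m → ℝ) × ℝ).2 : ℝ) = (f₀ x₀).toReal + 1 := rfl
          rw [h3] at h1
          nlinarith [h1]
        have hsum_nonpos : ∑ k, (f k x₀).toReal * μ k ≤ 0 := by
          apply Finset.sum_nonpos
          intro k _
          nlinarith [hμnn k, htk k]
        have hzero := le_antisymm hsum_nonpos hsum_nonneg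
        have hallzero := (Finset.sum_eq_zero_iff_of_nonpos
          (fun k _ => by nlinarith [hμnn k, htk k])).1 hzero j (Finset.mem_univ j)
        rcases mul_eq_zero.1 hallzero with h | h
        · exact absurd h (ne_of_lt (htk j))
        · exact hj h
    · exact h0
  set lam : Fin m → ℝ := fun k => μ k / μ0 with hlamdef
  refine ⟨lam, fun k => div_nonneg (hμnn k) hμ0nn, ?_⟩
  intro x
  by_cases hftop : f₀ x = ⊤
  · have hS : (∑ k, smulInf (lam k) (f k x)) ≠ ⊥ :=
      ereal_sum_ne_bot fun k => smulInf_ne_bot (hfb k x)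
    rw [hftop, EReal.top_add_of_ne_bot hS]
    exact le_top
  by_cases hktop : ∀ k, f k x ≠ ⊤
  swap
  · push_neg at hktop
    obtain ⟨k₀, hk₀⟩ := hktop
    have hS : (∑ k, smulInf (lam k) (f k x)) = ⊤ :=
      ereal_sum_eq_top (fun k => smulInf_ne_bot (hfb k x)) (k₀ := k₀) (by rw [hk₀, smulInf_top])
    rw [hS, EReal.add_top_of_ne_bot (hf₀b x)]
    exact le_top
  -- all values finite
  obtain ⟨r0, hr0⟩ : ∃ t : ℝ, f₀ x = (t : EReal) := ⟨_, ereal_eq_coe_of (hf₀b x) hftop⟩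
  have hrk : ∀ k, ∃ t : ℝ, f k x = (t : EReal) :=
    fun k => ⟨_, ereal_eq_coe_of (hfb k x) (hktop k)⟩
  choose rk hrkc using hrk
  have key : μ0 * c ≤ ∑ k, rk k * μ k + r0 * μ0 := by
    apply real_lim_of_slack (C := ∑ k, μ k + μ0)
      (add_nonneg (Finset.sum_nonneg fun k _ => hμnn k) hμ0nn)
    intro ε hε
    have hwxD : ((fun k => rk k + ε, r0 + ε) : (Fin m → ℝ) × ℝ) ∈ D := by
      refine ⟨x, fun k => ?_, ?_⟩
      · rw [hrkc k]
        exact EReal.coe_lt_coe_iff.2 (show rk k < rk k + ε by linarith)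
      · rw [hr0]
        exact EReal.coe_lt_coe_iff.2 (show r0 < r0 + ε by linarith)
    have h1 := hφ _ hwxD
    rw [hdecomp, hdecomp ((0 : Fin m → ℝ), c)] at h1
    have hz2 : ∑ k, ((0 : Fin m → ℝ), c).1 k * μ k = 0 := by
      apply Finset.sum_eq_zero
      intro k _
      show (0:ℝ) * μ k = 0
      ring
    have h2 : ∑ k, ((fun k => rk k + ε, r0 + ε) : (Fin m → ℝ) × ℝ).1 k * μ k
        = ∑ k, (rk k + ε) * μ k := rfl
    have hexp : ∑ k, (rk k + ε) * μ k = ∑ k, rk k * μ k + ε * ∑ k, μ k := by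
      rw [Finset.mul_sum, ← Finset.sum_add_distrib]
      apply Finset.sum_congr rfl
      intro k _
      ring
    have h3 : (((fun k => rk k + ε, r0 + ε) : (Fin m → ℝ) × ℝ).2 : ℝ) = r0 + ε := rfl
    rw [hz2, h2, hexp, h3] at h1
    nlinarith [h1]
  have hreal : c ≤ r0 + ∑ k, lam k * rk k := by
    have hdiv : ∑ k, lam k * rk k = (∑ k, rk k * μ k) / μ0 := by
      rw [Finset.sum_div]
      apply Finset.sum_congr rfl
      intro k _
      show μ k / μ0 * rk k = rk k * μ k / μ0
      ring
    have h8 : c - r0 ≤ (∑ k, rk k * μ k) / μ0 := by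
      rw [le_div_iff₀ hμ0pos]
      nlinarith [key]
    linarith [hdiv, h8]
  have hfin : f₀ x + ∑ k, smulInf (lam k) (f k x)
      = ((r0 + ∑ k, lam k * rk k : ℝ) : EReal) := by
    have h9 : ∀ k, smulInf (lam k) (f k x) = ((lam k * rk k : ℝ) : EReal) := by
      intro k
      rw [smulInf_coe (hktop k) (hfb k x), hrkc k]
      norm_cast
    rw [hr0, Finset.sum_congr rfl (fun k _ => h9 k), ← ereal_coe_sum, ← EReal.coe_add]
  rw [hfin]
  exact EReal.coe_le_coe_iff.2 hreal

/-! ### smulInf : convexity and continuity -/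

lemma smulInf_convexER {g : X → EReal} (hgc : ConvexER g) (hgb : ∀ x, g x ≠ ⊥) {a : ℝ}
    (ha : 0 ≤ a) : ConvexER (fun x => smulInf a (g x)) := by
  intro x y s t hs ht hst
  rcases eq_or_lt_of_le hs with hs0 | hs0
  · have ht1 : t = 1 := by linarith
    subst ht1
    rw [← hs0]
    simp only [EReal.coe_zero, zero_mul, zero_add, EReal.coe_one, one_mul, zero_smul, one_smul]
    exact le_refl _
  · rcases eq_or_lt_of_le ht with ht0 | ht0
    · have hs1 : s = 1 := by linarith
      subst hs1
      rw [← ht0]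
      simp only [EReal.coe_zero, zero_mul, add_zero, EReal.coe_one, one_mul, zero_smul, one_smul]
      exact le_refl _
    · show smulInf a (g (s • x + t • y)) ≤ (s : EReal) * smulInf a (g x)
        + (t : EReal) * smulInf a (g y)
      rcases eq_or_ne (g x) ⊤ with hgx | hgx
      · rw [hgx, smulInf_top, EReal.coe_mul_top_of_pos hs0,
          EReal.top_add_of_ne_bot (ereal_mul_ne_bot ht (smulInf_ne_bot (hgb y)))]
        exact le_top
      · rcases eq_or_ne (g y) ⊤ with hgy | hgy
        · rw [hgy, smulInf_top, EReal.coe_mul_top_of_pos ht0,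
            EReal.add_top_of_ne_bot (ereal_mul_ne_bot hs (smulInf_ne_bot (hgb x)))]
          exact le_top
        · have hgxc := ereal_eq_coe_of (hgb x) hgx
          have hgyc := ereal_eq_coe_of (hgb y) hgy
          set gx := (g x).toReal
          set gy := (g y).toReal
          have h1 : g (s • x + t • y) ≤ ((s * gx + t * gy : ℝ) : EReal) :=
            ereal_combo_le hgc hgb (le_of_eq hgxc) (le_of_eq hgyc) hs ht hst
          have hct : g (s • x + t • y) ≠ ⊤ := fun h => by
            rw [h] at h1
            exact absurd (top_le_iff.1 h1) (EReal.coe_ne_top _)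
          have h2 : (g (s • x + t • y)).toReal ≤ s * gx + t * gy :=
            EReal.toReal_le_toReal h1 (hgb _) (EReal.coe_ne_top _)
          rw [smulInf_coe hct (hgb _), smulInf_coe hgx (hgb x), smulInf_coe hgy (hgb y),
            ← EReal.coe_mul, ← EReal.coe_mul, ← EReal.coe_add, EReal.coe_le_coe_iff]
          nlinarith [mul_le_mul_of_nonneg_left h2 ha]

lemma smulInf_contAt {g : X → EReal} {x₁ : X} (hgcont : ContinuousAt g x₁) (hgt : g x₁ ≠ ⊤)
    (hgb : ∀ x, g x ≠ ⊥) (a : ℝ) : ContinuousAt (fun x => smulInf a (g x)) x₁ := by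
  set r₁ := (g x₁).toReal with hr₁
  have hgx₁ : g x₁ = (r₁ : EReal) := ereal_eq_coe_of (hgb x₁) hgt
  have hopen : IsOpen (Set.Ioo ((r₁ - 1 : ℝ) : EReal) ((r₁ + 1 : ℝ) : EReal)) := isOpen_Ioo
  have hmem : g x₁ ∈ Set.Ioo ((r₁ - 1 : ℝ) : EReal) ((r₁ + 1 : ℝ) : EReal) := by
    rw [hgx₁]
    exact ⟨EReal.coe_lt_coe_iff.2 (by linarith), EReal.coe_lt_coe_iff.2 (by linarith)⟩
  have hV : g ⁻¹' Set.Ioo ((r₁ - 1 : ℝ) : EReal) ((r₁ + 1 : ℝ) : EReal) ∈ 𝓝 x₁ :=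
    hgcont.preimage_mem_nhds (hopen.mem_nhds hmem)
  have heq : (fun x => ((a * (g x).toReal : ℝ) : EReal)) =ᶠ[𝓝 x₁]
      fun x => smulInf a (g x) := by
    filter_upwards [hV] with x hx
    exact (smulInf_coe (ne_top_of_lt hx.2) (hgb x)).symm
  have hcont2 : ContinuousAt (fun x => ((a * (g x).toReal : ℝ) : EReal)) x₁ := by
    have h1 : ContinuousAt (fun x => a * (g x).toReal) x₁ :=
      ((EReal.tendsto_toReal hgt (hgb x₁)).comp hgcont).const_mul a
    exact (continuous_coe_real_ereal.tendsto _).comp h1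
  exact hcont2.congr_of_eventuallyEq heq.symm

/-! ### Pairing inequalities in the bidual -/

lemma z_pairing {g : X → EReal} (hgp : ProperER g) {z : StrongDual ℝ (StrongDual ℝ X)}
    (hz : fbiconj g z ≤ 0) (q : StrongDual ℝ X) : (z q : EReal) ≤ fconj g q :=
  ereal_le_of_sub_nonpos (fconj_ne_bot hgp q)
    (le_trans (le_iSup (fun p => (z p : EReal) - fconj g p) q) hz)

lemma fbiconj_incl_le {g : X → EReal} (hgb : ∀ x, g x ≠ ⊥) (x : X) :
    fbiconj g (inclusionInDoubleDual ℝ X x) ≤ g x := by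
  apply iSup_le
  intro p
  rw [dual_def]
  exact ereal_coe_sub_le (hgb x) (le_fconj g p x)

lemma z_fconj_pos {g : X → EReal} (hgp : ProperER g) {z : StrongDual ℝ (StrongDual ℝ X)}
    (hz : ∀ q, (z q : EReal) ≤ fconj g q) {a : ℝ} (ha : 0 < a) (p : StrongDual ℝ X) :
    (z p : EReal) ≤ fconj (fun x => smulInf a (g x)) p := by
  have hnb : fconj (fun x => smulInf a (g x)) p ≠ ⊥ := by
    obtain ⟨x, hx⟩ := hgp.1
    intro hb
    have h1 := le_fconj (fun x => smulInf a (g x)) p x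
    rw [hb, le_bot_iff, smulInf_coe hx (hgp.2 x), ← EReal.coe_sub] at h1
    exact EReal.coe_ne_bot _ h1
  rcases eq_or_ne (fconj (fun x => smulInf a (g x)) p) ⊤ with ht | ht
  · rw [ht]; exact le_top
  obtain ⟨d, hd⟩ : ∃ t : ℝ, fconj (fun x => smulInf a (g x)) p = (t : EReal) :=
    ⟨_, ereal_eq_coe_of hnb ht⟩
  have hxall : ∀ x, (((a⁻¹ • p) x : ℝ) : EReal) - g x ≤ ((d / a : ℝ) : EReal) := by
    intro x
    rcases eq_or_ne (g x) ⊤ with hx | hx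
    · rw [hx, ereal_coe_sub_top]; exact bot_le
    · obtain ⟨w, hw⟩ : ∃ t : ℝ, g x = (t : EReal) := ⟨_, ereal_eq_coe_of (hgp.2 x) hx⟩
      have h1 := le_fconj (fun x => smulInf a (g x)) p x
      rw [hd, hw, smulInf_coe (EReal.coe_ne_top w) (EReal.coe_ne_bot w), EReal.toReal_coe,
        ← EReal.coe_sub, EReal.coe_le_coe_iff] at h1
      have happ : ((a⁻¹ • p) x : ℝ) = a⁻¹ * p x := rfl
      rw [happ, hw, ← EReal.coe_sub, EReal.coe_le_coe_iff, div_eq_mul_inv]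
      have h2 : (p x - a * w) * a⁻¹ ≤ d * a⁻¹ :=
        mul_le_mul_of_nonneg_right h1 (inv_nonneg.2 ha.le)
      calc a⁻¹ * p x - w = (p x - a * w) * a⁻¹ := by field_simp
        _ ≤ d * a⁻¹ := h2
  have h3 : fconj g (a⁻¹ • p) ≤ ((d / a : ℝ) : EReal) := fconj_le _ _ hxall
  have h4 := (hz (a⁻¹ • p)).trans h3
  rw [EReal.coe_le_coe_iff] at h4
  have h5 : z (a⁻¹ • p) = a⁻¹ * z p := by rw [map_smul, smul_eq_mul]
  rw [h5] at h4
  rw [hd, EReal.coe_le_coe_iff]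
  have h6 := mul_le_mul_of_nonneg_left h4 ha.le
  have h7 : a * (a⁻¹ * z p) = z p := by field_simp
  have h8 : a * (d / a) = d := by field_simp
  linarith [h6]

lemma z_fconj_zero {g : X → EReal} (hgp : ProperER g) {z : StrongDual ℝ (StrongDual ℝ X)}
    (hz : ∀ q, (z q : EReal) ≤ fconj g q) {q₀ : StrongDual ℝ X} {A : ℝ}
    (hq₀ : fconj g q₀ = (A : EReal)) (p : StrongDual ℝ X) :
    (z p : EReal) ≤ fconj (fun x => smulInf 0 (g x)) p := by
  obtain ⟨x₀, hx₀⟩ := hgp.1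
  have hG0 : ∀ x, g x ≠ ⊤ → smulInf 0 (g x) = 0 := by
    intro x hx
    rw [smulInf, if_neg hx, EReal.coe_zero, zero_mul]
  have hσb : fconj (fun x => smulInf 0 (g x)) p ≠ ⊥ := by
    intro hb
    have h1 := le_fconj (fun x => smulInf 0 (g x)) p x₀
    rw [hb, le_bot_iff, hG0 x₀ hx₀, sub_zero] at h1
    exact EReal.coe_ne_bot _ h1
  rcases eq_or_ne (fconj (fun x => smulInf 0 (g x)) p) ⊤ with ht | ht
  · rw [ht]; exact le_top
  obtain ⟨d, hd⟩ : ∃ t : ℝ, fconj (fun x => smulInf 0 (g x)) p = (t : EReal) :=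
    ⟨_, ereal_eq_coe_of hσb ht⟩
  have hpd : ∀ x, g x ≠ ⊤ → p x ≤ d := by
    intro x hx
    have h1 := le_fconj (fun x => smulInf 0 (g x)) p x
    rw [hd, hG0 x hx, sub_zero, EReal.coe_le_coe_iff] at h1
    exact h1
  have hkey : ∀ t : ℝ, 0 < t → fconj g (q₀ + t • p) ≤ ((A + t * d : ℝ) : EReal) := by
    intro t htp
    apply fconj_le
    intro x
    rcases eq_or_ne (g x) ⊤ with hx | hx
    · rw [hx, ereal_coe_sub_top]; exact bot_le
    · obtain ⟨w, hw⟩ : ∃ u : ℝ, g x = (u : EReal) := ⟨_, ereal_eq_coe_of (hgp.2 x) hx⟩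
      have h1 : q₀ x - w ≤ A := by
        have h2 := le_fconj g q₀ x
        rw [hq₀, hw, ← EReal.coe_sub, EReal.coe_le_coe_iff] at h2
        exact h2
      have happ : ((q₀ + t • p) x : ℝ) = q₀ x + t * p x := by
        rw [ContinuousLinearMap.add_apply, ContinuousLinearMap.smul_apply, smul_eq_mul]
      rw [happ, hw, ← EReal.coe_sub, EReal.coe_le_coe_iff]
      have h3 := hpd x hx
      nlinarith [h3, h1, htp.le]
  have hzq : ∀ t : ℝ, 0 < t → z q₀ + t * z p ≤ A + t * d := by
    intro t htp
    have h1 := (hz (q₀ + t • p)).trans (hkey t htp)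
    rw [EReal.coe_le_coe_iff] at h1
    rw [map_add, map_smul, smul_eq_mul] at h1
    exact h1
  rw [hd, EReal.coe_le_coe_iff]
  exact real_slope_le hzq

lemma exists_fconj_finite {g : X → EReal} (hgp : ProperER g) (hgc : ConvexER g) {x₁ : X}
    (hgt : g x₁ ≠ ⊤) (hgcont : ContinuousAt g x₁) :
    ∃ (q : StrongDual ℝ X) (A : ℝ), fconj g q = (A : EReal) := by
  set r₁ := (g x₁).toReal with hr₁
  have hgx₁ : g x₁ = (r₁ : EReal) := ereal_eq_coe_of (hgp.2 x₁) hgt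
  have hmem : g x₁ ∈ Set.Ioo ((r₁ - 1 : ℝ) : EReal) ((r₁ + 1 : ℝ) : EReal) := by
    rw [hgx₁]
    exact ⟨EReal.coe_lt_coe_iff.2 (by linarith), EReal.coe_lt_coe_iff.2 (by linarith)⟩
  obtain ⟨r, hr, hball⟩ :=
    Metric.mem_nhds_iff.1 (hgcont.preimage_mem_nhds (isOpen_Ioo.mem_nhds hmem))
  set G : X → EReal := eindicator (Metric.ball x₁ r) with hG
  have hGb : ∀ x, G x ≠ ⊥ := by
    intro x
    rw [hG, eindicator]
    split
    · exact EReal.coe_ne_bot 0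
    · exact top_ne_bot
  have hGc : ConvexER G := by
    intro x y s t hs ht hst
    rcases eq_or_lt_of_le hs with hs0 | hs0
    · have ht1 : t = 1 := by linarith
      subst ht1
      rw [← hs0]
      simp only [zero_smul, one_smul, zero_add, EReal.coe_zero, zero_mul, EReal.coe_one, one_mul]
      exact le_refl _
    rcases eq_or_lt_of_le ht with ht0 | ht0
    · have hs1 : s = 1 := by linarith
      subst hs1
      rw [← ht0]
      simp only [zero_smul, one_smul, add_zero, EReal.coe_zero, zero_mul, EReal.coe_one, one_mul]
      exact le_refl _
    show eindicator (Metric.ball x₁ r) (s • x + t • y) ≤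
      (s : EReal) * eindicator (Metric.ball x₁ r) x + (t : EReal) * eindicator (Metric.ball x₁ r) y
    by_cases hx : x ∈ Metric.ball x₁ r
    · by_cases hy : y ∈ Metric.ball x₁ r
      · have hxy := (convex_ball x₁ r) hx hy hs ht hst
        rw [eindicator, if_pos hxy, eindicator, if_pos hx, eindicator, if_pos hy, mul_zero,
          mul_zero, add_zero]
      · rw [show eindicator (Metric.ball x₁ r) y = ⊤ from if_neg hy,
          EReal.coe_mul_top_of_pos ht0,
          EReal.add_top_of_ne_bot (ereal_mul_ne_bot hs (hGb x))]
        exact le_top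
    · rw [show eindicator (Metric.ball x₁ r) x = ⊤ from if_neg hx,
        EReal.coe_mul_top_of_pos hs0,
        EReal.top_add_of_ne_bot (ereal_mul_ne_bot ht (hGb y))]
      exact le_top
  have hGx₁0 : G x₁ = 0 := by
    rw [hG, eindicator, if_pos (Metric.mem_ball_self hr)]
  have hGx₁t : G x₁ ≠ ⊤ := by
    rw [hGx₁0]
    exact ne_of_beq_false rfl
  have hGcont : ContinuousAt G x₁ := by
    have heq : G =ᶠ[𝓝 x₁] fun _ : X => (0 : EReal) := by
      filter_upwards [Metric.ball_mem_nhds x₁ hr] with x hx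
      rw [hG, eindicator, if_pos hx]
    exact continuousAt_const.congr_of_eventuallyEq heq
  have hlow : ∀ x, ((r₁ - 1 : ℝ) : EReal) ≤ g x + G x := by
    intro x
    by_cases hx : x ∈ Metric.ball x₁ r
    · have h1 := hball hx
      rw [hG, eindicator, if_pos hx, add_zero]
      exact h1.1.le
    · rw [hG, eindicator, if_neg hx, EReal.add_top_of_ne_bot (hgp.2 x)]
      exact le_top
  obtain ⟨p, hp⟩ := fenchel_core hgp.2 hgc hGb hGc hgt hGx₁t hGcont (r₁ - 1) hlow
  have hσb : fconj G p ≠ ⊥ := by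
    intro hb
    have h1 := le_fconj G p x₁
    rw [hb, le_bot_iff, hGx₁0, sub_zero] at h1
    exact EReal.coe_ne_bot _ h1
  have hfbne : fconj g (-p) ≠ ⊥ := fconj_ne_bot hgp _
  have hftne : fconj g (-p) ≠ ⊤ := by
    intro h
    rw [h, EReal.top_add_of_ne_bot hσb] at hp
    exact EReal.coe_ne_top _ (top_le_iff.1 hp)
  exact ⟨-p, _, ereal_eq_coe_of hfbne hftne⟩


/-- For a convex program with finitely many constraints
`(P): inf f₀(x) s.t. fₖ(x) ≤ 0, k = 1,…,m`, where the `fₖ` are proper convex, each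
constraint function is finite and continuous at some point of `dom f₀`, and the Slater
condition holds, the optimal value of `(P)` coincides with that of its biconjugate
relaxation posed in the bidual. -/
theorem biconjugate_relaxation_finitely_many_constraints
    {X : Type*} [NormedAddCommGroup X] [NormedSpace ℝ X] [CompleteSpace X]
    (m : ℕ) (f₀ : X → EReal) (f : Fin m → X → EReal)
    (hf₀p : ProperER f₀) (hf₀c : ConvexER f₀)
    (hfp : ∀ k, ProperER (f k)) (hfc : ∀ k, ConvexER (f k))
    (hcont : ∃ x₁, f₀ x₁ ≠ ⊤ ∧ ∀ k, f k x₁ ≠ ⊤ ∧ ContinuousAt (f k) x₁)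
    (hslater : ∃ x₀, f₀ x₀ ≠ ⊤ ∧ ∀ k, f k x₀ < 0) :
    (⨅ x ∈ {x : X | ∀ k, f k x ≤ 0}, f₀ x) =
      ⨅ z ∈ {z : StrongDual ℝ (StrongDual ℝ X) | ∀ k, fbiconj (f k) z ≤ 0}, fbiconj f₀ z := by
  obtain ⟨x₁, hx₁top, hx₁k⟩ := hcont
  obtain ⟨x₀, hx₀top, hx₀k⟩ := hslater
  apply le_antisymm
  · -- hard direction: primal value ≤ relaxed value
    apply le_iInf₂
    intro z hz
    by_contra hlt
    push_neg at hlt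
    obtain ⟨c, hc1, hc2⟩ := EReal.exists_between_coe_real hlt
    have hzk : ∀ k (q : StrongDual ℝ X), ((z q : ℝ) : EReal) ≤ fconj (f k) q :=
      fun k => z_pairing (hfp k) (hz k)
    obtain ⟨lam, hlam0, hlam⟩ :=
      lagrange hf₀p.2 hf₀c (fun k => (hfp k).2) hfc hx₀top hx₀k hc2
    set Gl : Fin m → X → EReal := fun k x => smulInf (lam k) (f k x) with hGl
    have hGlb : ∀ k x, Gl k x ≠ ⊥ := fun k x => smulInf_ne_bot ((hfp k).2 x)
    have hGlp : ∀ k, ProperER (Gl k) := by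
      intro k
      refine ⟨⟨x₀, ?_⟩, hGlb k⟩
      show smulInf (lam k) (f k x₀) ≠ ⊤
      rw [smulInf_coe (ne_top_of_lt (hx₀k k)) ((hfp k).2 x₀)]
      exact EReal.coe_ne_top _
    obtain ⟨p, hp⟩ := fenchel_sum m f₀ Gl hf₀p.2 hf₀c hGlb
      (fun k => smulInf_convexER (hfc k) ((hfp k).2) (hlam0 k)) x₁ hx₁top
      (fun k => by
        show smulInf (lam k) (f k x₁) ≠ ⊤
        rw [smulInf_coe ((hx₁k k).1) ((hfp k).2 x₁)]
        exact EReal.coe_ne_top _)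
      (fun k => smulInf_contAt (hx₁k k).2 (hx₁k k).1 ((hfp k).2) (lam k)) c hlam
    set q : StrongDual ℝ X := -(∑ k, p k) with hqdef
    have hσb : ∀ k, fconj (Gl k) (p k) ≠ ⊥ := fun k => fconj_ne_bot (hGlp k) _
    have hfbne : fconj f₀ q ≠ ⊥ := fconj_ne_bot hf₀p _
    have hσt : ∀ k, fconj (Gl k) (p k) ≠ ⊤ := by
      intro k hk
      have h2 : (∑ j, fconj (Gl j) (p j)) = ⊤ := ereal_sum_eq_top hσb hk
      rw [h2, EReal.add_top_of_ne_bot hfbne] at hp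
      exact EReal.coe_ne_top _ (top_le_iff.1 hp)
    have hftne : fconj f₀ q ≠ ⊤ := by
      intro hk
      rw [hk, EReal.top_add_of_ne_bot (ereal_sum_ne_bot hσb)] at hp
      exact EReal.coe_ne_top _ (top_le_iff.1 hp)
    have hsk : ∀ k, ∃ t : ℝ, fconj (Gl k) (p k) = (t : EReal) :=
      fun k => ⟨_, ereal_eq_coe_of (hσb k) (hσt k)⟩
    choose sk hskc using hsk
    obtain ⟨ar, har⟩ : ∃ t : ℝ, fconj f₀ q = (t : EReal) :=
      ⟨_, ereal_eq_coe_of hfbne hftne⟩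
    have hps : ar + ∑ k, sk k ≤ -c := by
      rw [har, Finset.sum_congr rfl (fun k _ => hskc k), ← ereal_coe_sum, ← EReal.coe_add,
        EReal.coe_le_coe_iff] at hp
      exact hp
    have hzs : ∀ k, z (p k) ≤ sk k := by
      intro k
      have h1 : ((z (p k) : ℝ) : EReal) ≤ fconj (Gl k) (p k) := by
        rcases eq_or_lt_of_le (hlam0 k) with h0 | h0
        · have h2 := z_fconj_zero (hfp k) (hzk k)
            (hq₀ := (exists_fconj_finite (hfp k) (hfc k) (hx₁k k).1 (hx₁k k).2).choose_spec.choose_spec)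
            (p k)
          rw [h0] at h2
          exact h2
        · exact z_fconj_pos (hfp k) (hzk k) h0 (p k)
      rw [hskc k, EReal.coe_le_coe_iff] at h1
      exact h1
    have hzq : z q = -∑ k, z (p k) := by
      rw [hqdef, map_neg, map_sum]
    have hfinal : (c : EReal) ≤ fbiconj f₀ z := by
      have h1 : (z q : EReal) - fconj f₀ q ≤ fbiconj f₀ z :=
        le_iSup (fun p => (z p : EReal) - fconj f₀ p) q
      have h2 : (c : EReal) ≤ (z q : EReal) - fconj f₀ q := by
        rw [har, ← EReal.coe_sub, EReal.coe_le_coe_iff, hzq]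
        have h3 : ∑ k, z (p k) ≤ ∑ k, sk k := Finset.sum_le_sum fun k _ => hzs k
        linarith
      exact h2.trans h1
    exact absurd hc1 (not_lt.2 hfinal)
  · -- easy direction: relaxed value ≤ primal value
    apply le_iInf₂
    intro x hx
    have hz₀ : (inclusionInDoubleDual ℝ X x) ∈
        {z : StrongDual ℝ (StrongDual ℝ X) | ∀ k, fbiconj (f k) z ≤ 0} :=
      fun k => (fbiconj_incl_le ((hfp k).2) x).trans (hx k)
    exact le_trans (iInf₂_le (inclusionInDoubleDual ℝ X x) hz₀) (fbiconj_incl_le hf₀p.2 x)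
end
end

section
/- Let f_0, f : X → ℝ ∪ {+∞} be convex functions such that μ := inf{ f_0(x) : f(x) ≤ 0, x ∈ X } is a real number and there exists x_0 ∈ dom f_0 with f(x_0) < 0. Then a real number α satisfies inf_{x ∈ X} max{ f_0(x) − α, f(x) } = 0 if and only if α = μ. -/
open Filter Topology Set NormedSpace
open scoped Classical

noncomputable section

variable {X : Type*} [NormedAddCommGroup X] [NormedSpace ℝ X]

/-- Auxiliary: convexity bound with real upper bounds on the endpoint values. -/
lemma convexER_real_bound {X : Type*} [NormedAddCommGroup X] [NormedSpace ℝ X]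
    {g : X → EReal} (hg : ConvexER g) {u v : X} {p q t : ℝ}
    (hu : g u ≤ (p : EReal)) (hv : g v ≤ (q : EReal)) (ht0 : 0 ≤ t) (ht1 : t ≤ 1) :
    g ((1 - t) • u + t • v) ≤ (((1 - t) * p + t * q : ℝ) : EReal) := by
  have h := hg u v (1 - t) t (by linarith) ht0 (by ring)
  refine h.trans ?_
  have h1 : ((1 - t : ℝ) : EReal) * g u ≤ ((1 - t : ℝ) : EReal) * (p : EReal) :=
    mul_le_mul_of_nonneg_left hu (by exact_mod_cast (by linarith : (0:ℝ) ≤ 1 - t))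
  have h2 : ((t : ℝ) : EReal) * g v ≤ ((t : ℝ) : EReal) * (q : EReal) :=
    mul_le_mul_of_nonneg_left hv (by exact_mod_cast ht0)
  calc ((1 - t : ℝ) : EReal) * g u + (t : EReal) * g v
      ≤ ((1 - t : ℝ) : EReal) * (p : EReal) + (t : EReal) * (q : EReal) :=
        add_le_add h1 h2
    _ = (((1 - t) * p + t * q : ℝ) : EReal) := by
        rw [← EReal.coe_mul, ← EReal.coe_mul, ← EReal.coe_add]

/-- (Characterization of the optimal value.) Let `f₀, f : X → ℝ ∪ {+∞}`
be convex, `μ := inf{f₀(x) : f(x) ≤ 0}` a real number, and assume `f(x₀) < 0` for some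
`x₀ ∈ dom f₀`. Then a real number `α` satisfies `inf_x max{f₀(x) − α, f(x)} = 0` if and
only if `α = μ`. -/
theorem inf_max_eq_zero_iff_eq_value
    {X : Type*} [NormedAddCommGroup X] [NormedSpace ℝ X] [CompleteSpace X]
    (f₀ f : X → EReal) (hf₀c : ConvexER f₀) (hfc : ConvexER f)
    (hf₀b : ∀ x, f₀ x ≠ ⊥) (hfb : ∀ x, f x ≠ ⊥)
    (μ : ℝ) (hμ : (⨅ x ∈ {x : X | f x ≤ 0}, f₀ x) = (μ : EReal))
    (hslater : ∃ x₀, f₀ x₀ ≠ ⊤ ∧ f x₀ < 0) (α : ℝ) :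
    (⨅ x : X, max (f₀ x - (α : EReal)) (f x)) = 0 ↔ α = μ := by
  classical
  obtain ⟨x₀, hx₀top, hx₀neg⟩ := hslater
  -- real representations of the Slater point values
  have hfx₀top : f x₀ ≠ ⊤ := (hx₀neg.trans_le le_top).ne
  set δ : ℝ := -(f x₀).toReal with hδdef
  have hfx₀ : f x₀ = ((-δ : ℝ) : EReal) := by
    simp only [hδdef, neg_neg]
    exact (EReal.coe_toReal hfx₀top (hfb x₀)).symm
  have hδpos : 0 < δ := by
    have : ((-δ : ℝ) : EReal) < ((0 : ℝ) : EReal) := by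
      rw [← hfx₀]; exact_mod_cast hx₀neg
    have := EReal.coe_lt_coe_iff.mp this
    linarith
  set c : ℝ := (f₀ x₀).toReal with hcdef
  have hf₀x₀ : f₀ x₀ = ((c : ℝ) : EReal) := (EReal.coe_toReal hx₀top (hf₀b x₀)).symm
  -- lower bound from feasibility
  have hfeas_lb : ∀ x : X, f x ≤ 0 → (μ : EReal) ≤ f₀ x := by
    intro x hx
    rw [← hμ]
    exact iInf₂_le x hx
  -- existence of nearly optimal feasible points
  have hfeas_ex : ∀ b : EReal, (μ : EReal) < b → ∃ x : X, f x ≤ 0 ∧ f₀ x < b := by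
    intro b hb
    have : (⨅ x ∈ {x : X | f x ≤ 0}, f₀ x) < b := by rw [hμ]; exact hb
    rw [iInf_lt_iff] at this
    obtain ⟨x, hx⟩ := this
    rw [iInf_lt_iff] at hx
    obtain ⟨hx1, hx2⟩ := hx
    exact ⟨x, hx1, hx2⟩
  constructor
  · -- forward direction: inf = 0 → α = μ
    intro hα
    -- any point gives max ≥ 0
    have hge : ∀ x : X, (0 : EReal) ≤ max (f₀ x - (α : EReal)) (f x) := by
      intro x
      rw [← hα]
      exact iInf_le _ x
    -- for any ε > 0 there is x with max < ε
    have hex : ∀ ε : ℝ, 0 < ε → ∃ x : X, f₀ x < ((α + ε : ℝ) : EReal) ∧ f x < ((ε : ℝ) : EReal) := by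
      intro ε hε
      have h1 : (⨅ x : X, max (f₀ x - (α : EReal)) (f x)) < ((ε : ℝ) : EReal) := by
        rw [hα]; exact_mod_cast hε
      rw [iInf_lt_iff] at h1
      obtain ⟨x, hx⟩ := h1
      have hx1 : f₀ x - (α : EReal) < (ε : EReal) := (le_max_left _ _).trans_lt hx
      have hx2 : f x < (ε : EReal) := (le_max_right _ _).trans_lt hx
      refine ⟨x, ?_, hx2⟩
      have := (EReal.sub_lt_iff (Or.inl (EReal.coe_ne_bot α))
        (Or.inl (EReal.coe_ne_top α))).mp hx1
      rwa [← EReal.coe_add, add_comm] at this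
    -- Step 1 : μ ≤ α
    have hμα : μ ≤ α := by
      -- for each ε > 0 we build a feasible point with value ≤ B ε
      set B : ℝ → ℝ := fun ε => (1 - ε / (ε + δ)) * (α + ε) + (ε / (ε + δ)) * c with hBdef
      have key : ∀ ε : ℝ, 0 < ε → μ ≤ B ε := by
        intro ε hε
        obtain ⟨x, hx1, hx2⟩ := hex ε hε
        set t : ℝ := ε / (ε + δ) with htdef
        have hεδ : 0 < ε + δ := by linarith
        have ht0 : 0 ≤ t := div_nonneg hε.le hεδ.le
        have ht1 : t ≤ 1 := by
          rw [div_le_one hεδ]; linarith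
        set y : X := (1 - t) • x + t • x₀ with hydef
        -- f y ≤ 0
        have hfy : f y ≤ 0 := by
          have := convexER_real_bound hfc (le_of_lt hx2) (le_of_eq hfx₀) ht0 ht1
          refine this.trans ?_
          have : (1 - t) * ε + t * (-δ) = 0 := by
            rw [htdef, div_eq_mul_inv]
            have hinv := mul_inv_cancel₀ hεδ.ne'
            linear_combination (-ε) * hinv
          rw [this]
          norm_num
        -- f₀ y ≤ B ε
        have hf₀y : f₀ y ≤ ((B ε : ℝ) : EReal) := by
          have := convexER_real_bound hf₀c (le_of_lt hx1) (le_of_eq hf₀x₀) ht0 ht1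
          exact this
        have := (hfeas_lb y hfy).trans hf₀y
        exact_mod_cast this
      -- B tends to α as ε → 0⁺
      have hcont : ContinuousAt B 0 := by
        have hne : (0 : ℝ) + δ ≠ 0 := by linarith
        fun_prop (disch := simpa using hne)
      have hB0 : B 0 = α := by simp [hBdef]
      have htend : Filter.Tendsto B (nhdsWithin 0 (Set.Ioi 0)) (nhds α) := by
        rw [← hB0]
        exact hcont.continuousWithinAt.tendsto
      refine ge_of_tendsto htend ?_
      filter_upwards [self_mem_nhdsWithin] with ε hε
      exact key ε hε
    -- Step 2 : α ≤ μ
    have hαμ : α ≤ μ := by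
      by_contra h
      push_neg at h
      -- pick a feasible point with f₀ x < α
      obtain ⟨x, hx1, hx2⟩ := hfeas_ex ((α : ℝ) : EReal) (by exact_mod_cast h)
      have hfx_top : f₀ x ≠ ⊤ := hx2.ne_top
      set a : ℝ := (f₀ x).toReal with hadef
      have hf₀x : f₀ x = ((a : ℝ) : EReal) := (EReal.coe_toReal hfx_top (hf₀b x)).symm
      have haα : a < α := by
        rw [hf₀x] at hx2; exact_mod_cast hx2
      -- choose t small
      set t : ℝ := min (1/2) ((α - a) / (2 * (|c - a| + 1))) with htdef
      have hden : 0 < 2 * (|c - a| + 1) := by positivity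
      have ht0 : 0 < t := by
        refine lt_min (by norm_num) (div_pos (by linarith) hden)
      have ht1 : t ≤ 1 := (min_le_left _ _).trans (by norm_num)
      have htb : t * (c - a) < α - a := by
        have h1 : t ≤ (α - a) / (2 * (|c - a| + 1)) := min_le_right _ _
        have h2 : t * (c - a) ≤ t * |c - a| := by
          have := le_abs_self (c - a)
          nlinarith
        have h3 : t * |c - a| ≤ ((α - a) / (2 * (|c - a| + 1))) * |c - a| := by
          have : (0:ℝ) ≤ |c - a| := abs_nonneg _
          nlinarith
        have h4 : ((α - a) / (2 * (|c - a| + 1))) * |c - a| < α - a := by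
          rw [div_mul_eq_mul_div, div_lt_iff₀ hden]
          have : (0:ℝ) ≤ |c - a| := abs_nonneg _
          nlinarith
        linarith
      set y : X := (1 - t) • x + t • x₀ with hydef
      have hfx0 : f x ≤ ((0 : ℝ) : EReal) := by exact_mod_cast hx1
      have hfy : f y < 0 := by
        have := convexER_real_bound hfc hfx0 (le_of_eq hfx₀) ht0.le ht1
        refine this.trans_lt ?_
        have : (1 - t) * 0 + t * (-δ) < 0 := by nlinarith
        exact_mod_cast this
      have hf₀y : f₀ y < (α : EReal) := by
        have := convexER_real_bound hf₀c (le_of_eq hf₀x) (le_of_eq hf₀x₀) ht0.le ht1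
        refine this.trans_lt ?_
        have : (1 - t) * a + t * c < α := by nlinarith
        exact_mod_cast this
      have hmax : max (f₀ y - (α : EReal)) (f y) < 0 := by
        refine max_lt ?_ hfy
        rw [EReal.sub_lt_iff (Or.inl (EReal.coe_ne_bot α)) (Or.inl (EReal.coe_ne_top α))]
        rwa [zero_add]
      have : (0 : EReal) ≤ max (f₀ y - (α : EReal)) (f y) := hge y
      exact absurd hmax this.not_gt
    linarith
  · -- backward direction: α = μ → inf = 0
    intro hα
    subst hα
    apply le_antisymm
    · -- inf ≤ 0
      apply le_of_forall_gt_imp_ge_of_dense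
      intro b hb
      rcases lt_or_ge b ⊤ with hbtop | hbtop
      · have hbbot : b ≠ ⊥ := by
          intro h; rw [h] at hb; exact (not_lt_bot hb).elim
        set ε : ℝ := b.toReal with hεdef
        have hbε : b = ((ε : ℝ) : EReal) := (EReal.coe_toReal hbtop.ne hbbot).symm
        have hεpos : 0 < ε := by
          rw [hbε] at hb; exact_mod_cast hb
        obtain ⟨x, hx1, hx2⟩ := hfeas_ex ((α + ε : ℝ) : EReal)
          (by exact_mod_cast (by linarith : α < α + ε))
        refine (iInf_le _ x).trans ?_
        rw [hbε]
        apply max_le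
        · have hfx_top : f₀ x ≠ ⊤ := hx2.ne_top
          have hf₀x : f₀ x = (((f₀ x).toReal : ℝ) : EReal) :=
            (EReal.coe_toReal hfx_top (hf₀b x)).symm
          rw [hf₀x]
          rw [hf₀x] at hx2
          have : (f₀ x).toReal < α + ε := by exact_mod_cast hx2
          rw [← EReal.coe_sub]
          exact_mod_cast (by linarith : (f₀ x).toReal - α ≤ ε)
        · exact hx1.trans (by exact_mod_cast hεpos.le)
      · have : b = ⊤ := top_le_iff.mp (le_of_not_gt (fun h => absurd h hbtop.not_gt))
        rw [this]; exact le_top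
    · -- 0 ≤ inf
      apply le_iInf
      intro x
      rcases le_or_gt (f x) 0 with hx | hx
      · have hμx := hfeas_lb x hx
        refine le_trans ?_ (le_max_left _ _)
        rw [EReal.le_sub_iff_add_le (Or.inl (EReal.coe_ne_bot α)) (Or.inl (EReal.coe_ne_top α)), zero_add]
        exact hμx
      · exact le_trans hx.le (le_max_right _ _)
end
end

section
/- Let X = c_0, the Banach space of real sequences converging to 0 with the supremum norm, whose bidual is X** = ℓ_∞, let c_00 ⊂ c_0 be the subspace of sequences with only finitely many nonzero terms, and let L ⊂ c_0 be a finite-dimensional subspace with L ≠ {0} and L ∩ c_00 = {0}. Set f := I_{c_00} and g := I_L. Then f** = I_{ℓ_∞} and g** = I_L on X**, so that f + g = (f+g)** = I_{{0}} while f** + g** = I_L; in particular the biconjugate sum rule fails: (f + g)** ≠ f** + g**. -/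
open Filter Topology Set NormedSpace
open scoped Classical

noncomputable section

variable {X : Type*} [NormedAddCommGroup X] [NormedSpace ℝ X]

/-! ### Auxiliary material for Statement 15 -/

section Aux

/-- Supremum of a linear-type functional over a submodule (with `⊥` outside). -/
lemma isup_ite_eq {Y : Type*} [AddCommGroup Y] [Module ℝ Y] (A : Submodule ℝ Y)
    (φ : Y → ℝ) (hφ : ∀ (t : ℝ) (y : Y), φ (t • y) = t * φ y) :
    (⨆ y : Y, (if y ∈ A then ((φ y : ℝ) : EReal) else ⊥)) =
      if ∀ y ∈ A, φ y = 0 then 0 else ⊤ := by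
  split_ifs with h
  · apply le_antisymm
    · apply iSup_le; intro y
      split_ifs with hy
      · simp [h y hy]
      · exact bot_le
    · have h0 := le_iSup (fun y => if y ∈ A then ((φ y : ℝ) : EReal) else ⊥) (0 : Y)
      simpa [A.zero_mem, h 0 A.zero_mem] using h0
  · push_neg at h
    obtain ⟨y, hyA, hy⟩ := h
    rw [iSup_eq_top]
    intro b hb
    obtain ⟨r, hbr, -⟩ := EReal.exists_between_coe_real hb
    refine ⟨((r + 1) / φ y) • y, ?_⟩
    rw [if_pos (A.smul_mem _ hyA), hφ, div_mul_cancel₀ _ hy]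
    exact lt_trans hbr (by exact_mod_cast lt_add_one r)

lemma fconj_eindicator (A : Submodule ℝ X) (p : StrongDual ℝ X) :
    fconj (eindicator (A : Set X)) p = if ∀ x ∈ A, p x = 0 then 0 else ⊤ := by
  have hterm : ∀ x : X, (p x : EReal) - eindicator (A : Set X) x =
      if x ∈ A then ((p x : ℝ) : EReal) else ⊥ := by
    intro x
    by_cases hx : x ∈ A <;> simp [eindicator, hx, EReal.sub_top]
  rw [fconj]
  simp_rw [hterm]
  exact isup_ite_eq A (fun x => p x) (by intro t y; simp)

/-- The annihilator of a submodule inside the topological dual. -/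
def perpSub (A : Submodule ℝ X) : Submodule ℝ (StrongDual ℝ X) where
  carrier := {p | ∀ x ∈ A, p x = 0}
  add_mem' := by intro p q hp hq x hx; simp [ContinuousLinearMap.add_apply, hp x hx, hq x hx]
  zero_mem' := by intro x hx; simp
  smul_mem' := by intro c p hp x hx; simp [hp x hx]

lemma mem_perpSub {A : Submodule ℝ X} {p : StrongDual ℝ X} :
    p ∈ perpSub A ↔ ∀ x ∈ A, p x = 0 := Iff.rfl

lemma fbiconj_eindicator (A : Submodule ℝ X) (z : StrongDual ℝ (StrongDual ℝ X)) :
    fbiconj (eindicator (A : Set X)) z =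
      if ∀ p : StrongDual ℝ X, (∀ x ∈ A, p x = 0) → z p = 0 then 0 else ⊤ := by
  have hterm : ∀ p : StrongDual ℝ X, (z p : EReal) - fconj (eindicator (A : Set X)) p =
      if p ∈ perpSub A then ((z p : ℝ) : EReal) else ⊥ := by
    intro p
    rw [fconj_eindicator]
    by_cases hp : p ∈ perpSub A
    · rw [if_pos (mem_perpSub.mp hp), if_pos hp]; simp
    · rw [if_neg (fun h => hp (mem_perpSub.mpr h)), if_neg hp, EReal.sub_top]
  rw [fbiconj]
  simp_rw [hterm]
  rw [isup_ite_eq (perpSub A) (fun p => z p) (by intro t y; simp)]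
  rfl

/-- Every element of the bidual that kills the annihilator of a finite-dimensional
subspace `L` is the canonical image of an element of `L`. -/
lemma mem_image_J_of_vanish (L : Submodule ℝ X) [FiniteDimensional ℝ L]
    (z : StrongDual ℝ (StrongDual ℝ X)) (hz : ∀ p : StrongDual ℝ X, (∀ x ∈ L, p x = 0) → z p = 0) :
    z ∈ (inclusionInDoubleDual ℝ X) '' (L : Set X) := by
  let b := Module.finBasis ℝ L
  have hext : ∀ i, ∃ P : StrongDual ℝ X, ∀ y : L, P y = b.repr y i := by
    intro i
    obtain ⟨P, hP, -⟩ := exists_extension_norm_eq L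
      (LinearMap.toContinuousLinearMap (b.coord i))
    refine ⟨P, fun y => ?_⟩
    rw [hP y]
    simp [Module.Basis.coord_apply]
  choose P hP using hext
  set x : X := ∑ i, z (P i) • (b i : X) with hxdef
  have hxL : x ∈ L := Submodule.sum_mem _ (fun i _ => Submodule.smul_mem _ _ (b i).2)
  refine ⟨x, hxL, ?_⟩
  ext p
  rw [dual_def]
  have hq : ∀ y ∈ L, (p - ∑ i, p (b i : X) • P i) y = 0 := by
    intro y hy
    simp only [ContinuousLinearMap.sub_apply, ContinuousLinearMap.sum_apply,
      ContinuousLinearMap.smul_apply, smul_eq_mul]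
    have hyx : y = ∑ i, b.repr ⟨y, hy⟩ i • (b i : X) := by
      have h1 : ((⟨y, hy⟩ : L) : X) = ((∑ i, b.repr ⟨y, hy⟩ i • b i : L) : X) := by
        rw [b.sum_repr ⟨y, hy⟩]
      exact h1.trans (by simp only [Submodule.coe_sum, Submodule.coe_smul])
    have h2 : p y = ∑ i, b.repr ⟨y, hy⟩ i * p (b i : X) := by
      conv_lhs => rw [hyx]
      rw [map_sum]
      simp [smul_eq_mul]
    have h3 : ∀ i, P i y = b.repr ⟨y, hy⟩ i := fun i => hP i ⟨y, hy⟩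
    rw [h2, sub_eq_zero]
    refine Finset.sum_congr rfl fun i _ => ?_
    rw [h3 i, mul_comm]
  have hzq := hz _ hq
  rw [map_sub] at hzq
  have h4 : z (∑ i, p (b i : X) • P i) = ∑ i, p (b i : X) * z (P i) := by
    rw [map_sum]; simp [smul_eq_mul]
  have h5 : z p = ∑ i, p (b i : X) * z (P i) := by
    rw [← h4]; linarith
  rw [h5, hxdef, map_sum]
  refine (Finset.sum_congr rfl fun i _ => ?_).symm
  rw [map_smul, smul_eq_mul, mul_comm]

end Aux

section C00

/-- The subspace `c₀₀` of finitely supported sequences inside `c₀`. -/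
def c00 : Submodule ℝ (ZeroAtInftyContinuousMap ℕ ℝ) where
  carrier := {x | (Function.support fun n => x n).Finite}
  add_mem' := by
    intro a b ha hb
    refine (ha.union hb).subset ?_
    intro n hn
    simp only [Function.mem_support, Set.mem_union] at *
    by_contra h
    push_neg at h
    exact hn (by simp [h.1, h.2])
  zero_mem' := by simp [Function.support]
  smul_mem' := by
    intro c a ha
    refine ha.subset ?_
    intro n hn
    simp only [Function.mem_support] at *
    intro h
    exact hn (by simp [h])

/-- Truncation of a `c₀` sequence after index `N`. -/
def trunc (x : ZeroAtInftyContinuousMap ℕ ℝ) (N : ℕ) : ZeroAtInftyContinuousMap ℕ ℝ where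
  toFun n := if n ≤ N then x n else 0
  continuous_toFun := continuous_of_discreteTopology
  zero_at_infty' := by
    rw [cocompact_eq_atTop]
    refine Tendsto.congr' ?_ tendsto_const_nhds
    filter_upwards [eventually_gt_atTop N] with n hn
    exact (if_neg (by omega)).symm

lemma trunc_apply (x : ZeroAtInftyContinuousMap ℕ ℝ) (N n : ℕ) :
    trunc x N n = if n ≤ N then x n else 0 := rfl

lemma trunc_mem (x : ZeroAtInftyContinuousMap ℕ ℝ) (N : ℕ) : trunc x N ∈ c00 := by
  refine (Set.finite_Iic N).subset ?_
  intro n hn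
  rw [Function.mem_support] at hn
  rw [Set.mem_Iic]
  by_contra h
  push_neg at h
  exact hn (by rw [trunc_apply, if_neg (by omega)])

/-- A continuous functional on `c₀` vanishing on `c₀₀` is zero. -/
lemma vanish_c00 (p : StrongDual ℝ (ZeroAtInftyContinuousMap ℕ ℝ))
    (hp : ∀ x ∈ c00, p x = 0) : p = 0 := by
  ext x
  simp only [ContinuousLinearMap.zero_apply]
  have key : ∀ ε : ℝ, 0 < ε → ‖p x‖ ≤ ‖p‖ * ε := by
    intro ε hε
    have hx := zero_at_infty x
    rw [cocompact_eq_atTop] at hx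
    obtain ⟨N, hN⟩ := Metric.tendsto_atTop.mp hx ε hε
    have hnorm : ‖x - trunc x N‖ ≤ ε := by
      rw [← ZeroAtInftyContinuousMap.norm_toBCF_eq_norm]
      refine (BoundedContinuousFunction.norm_le hε.le).2 ?_
      intro n
      show ‖x n - trunc x N n‖ ≤ ε
      rw [trunc_apply]
      by_cases hn : n ≤ N
      · simp [hn, hε.le]
      · rw [if_neg hn, sub_zero]
        have := hN n (by omega)
        rw [dist_zero_right] at this
        exact this.le
    have hxe : p x = p (x - trunc x N) := by
      rw [map_sub, hp _ (trunc_mem x N), sub_zero]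
    rw [hxe]
    calc ‖p (x - trunc x N)‖ ≤ ‖p‖ * ‖x - trunc x N‖ := p.le_opNorm _
    _ ≤ ‖p‖ * ε := mul_le_mul_of_nonneg_left hnorm (norm_nonneg p)
  have h0 : ‖p x‖ ≤ 0 := by
    by_contra h
    push_neg at h
    have hε : 0 < ‖p x‖ / (2 * (‖p‖ + 1)) := by positivity
    have h1 := key _ hε
    have h2 : (0:ℝ) < ‖p‖ + 1 := by positivity
    have h3 : ‖p‖ * (‖p x‖ / (2 * (‖p‖ + 1))) ≤ (‖p‖ + 1) * (‖p x‖ / (2 * (‖p‖ + 1))) :=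
      mul_le_mul_of_nonneg_right (by linarith) hε.le
    have h4 : (‖p‖ + 1) * (‖p x‖ / (2 * (‖p‖ + 1))) = ‖p x‖ / 2 := by
      field_simp
    linarith
  simpa using norm_le_zero_iff.mp h0

end C00

/-- (Failure of the biconjugate sum rule in `c₀`.) Let `X = c₀`,
`c₀₀ ⊂ c₀` the subspace of finitely supported sequences, and `L ⊂ c₀` a nontrivial
finite-dimensional subspace with `L ∩ c₀₀ = {0}`. With `f := I_{c₀₀}` and `g := I_L`:
`f** = I_{ℓ∞}` (the zero function on the whole bidual), `g** = I_L` (indicator of the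
canonical image of `L` in the bidual), `f + g = I_{{0}}`, `(f+g)** = I_{{0}}`, and in
particular `(f + g)** ≠ f** + g**`. -/
theorem biconj_sum_rule_fails_in_c0
    (L : Submodule ℝ (ZeroAtInftyContinuousMap ℕ ℝ)) [FiniteDimensional ℝ L]
    (hL : L ≠ ⊥)
    (hLc : (L : Set (ZeroAtInftyContinuousMap ℕ ℝ)) ∩
      {x | (Function.support fun n => x n).Finite} = {0}) :
    fbiconj (eindicator {x : ZeroAtInftyContinuousMap ℕ ℝ |
        (Function.support fun n => x n).Finite}) =
      eindicator (Set.univ : Set (StrongDual ℝ (StrongDual ℝ (ZeroAtInftyContinuousMap ℕ ℝ)))) ∧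
    fbiconj (eindicator (L : Set (ZeroAtInftyContinuousMap ℕ ℝ))) =
      eindicator ((inclusionInDoubleDual ℝ (ZeroAtInftyContinuousMap ℕ ℝ)) ''
        (L : Set (ZeroAtInftyContinuousMap ℕ ℝ))) ∧
    (fun x => eindicator {x : ZeroAtInftyContinuousMap ℕ ℝ |
        (Function.support fun n => x n).Finite} x +
        eindicator (L : Set (ZeroAtInftyContinuousMap ℕ ℝ)) x) =
      eindicator ({0} : Set (ZeroAtInftyContinuousMap ℕ ℝ)) ∧
    fbiconj (fun x => eindicator {x : ZeroAtInftyContinuousMap ℕ ℝ |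
        (Function.support fun n => x n).Finite} x +
        eindicator (L : Set (ZeroAtInftyContinuousMap ℕ ℝ)) x) =
      eindicator ({0} : Set (StrongDual ℝ (StrongDual ℝ (ZeroAtInftyContinuousMap ℕ ℝ)))) ∧
    fbiconj (fun x => eindicator {x : ZeroAtInftyContinuousMap ℕ ℝ |
        (Function.support fun n => x n).Finite} x +
        eindicator (L : Set (ZeroAtInftyContinuousMap ℕ ℝ)) x) ≠
      fun z => fbiconj (eindicator {x : ZeroAtInftyContinuousMap ℕ ℝ |
        (Function.support fun n => x n).Finite}) z +
        fbiconj (eindicator (L : Set (ZeroAtInftyContinuousMap ℕ ℝ))) z := by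
  have hS : {x : ZeroAtInftyContinuousMap ℕ ℝ | (Function.support fun n => x n).Finite} =
      (c00 : Set (ZeroAtInftyContinuousMap ℕ ℝ)) := rfl
  have h1 : fbiconj (eindicator {x : ZeroAtInftyContinuousMap ℕ ℝ |
        (Function.support fun n => x n).Finite}) =
      eindicator (Set.univ : Set (StrongDual ℝ (StrongDual ℝ (ZeroAtInftyContinuousMap ℕ ℝ)))) := by
    funext z
    rw [hS, fbiconj_eindicator]
    rw [if_pos, eindicator, if_pos (Set.mem_univ z)]
    intro p hp
    rw [vanish_c00 p hp]
    simp
  have h2 : fbiconj (eindicator (L : Set (ZeroAtInftyContinuousMap ℕ ℝ))) =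
      eindicator ((inclusionInDoubleDual ℝ (ZeroAtInftyContinuousMap ℕ ℝ)) ''
        (L : Set (ZeroAtInftyContinuousMap ℕ ℝ))) := by
    funext z
    rw [fbiconj_eindicator]
    have hc : (∀ p : StrongDual ℝ (ZeroAtInftyContinuousMap ℕ ℝ),
        (∀ x ∈ L, p x = 0) → z p = 0) ↔
        z ∈ (inclusionInDoubleDual ℝ (ZeroAtInftyContinuousMap ℕ ℝ)) ''
          (L : Set (ZeroAtInftyContinuousMap ℕ ℝ)) := by
      constructor
      · exact mem_image_J_of_vanish L z
      · rintro ⟨x, hxL, rfl⟩ p hp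
        rw [dual_def]
        exact hp x hxL
    simp only [eindicator]
    exact if_congr hc rfl rfl
  have h3 : (fun x => eindicator {x : ZeroAtInftyContinuousMap ℕ ℝ |
        (Function.support fun n => x n).Finite} x +
        eindicator (L : Set (ZeroAtInftyContinuousMap ℕ ℝ)) x) =
      eindicator ({0} : Set (ZeroAtInftyContinuousMap ℕ ℝ)) := by
    funext x
    by_cases hx : x = 0
    · subst hx
      have h0S : (0 : ZeroAtInftyContinuousMap ℕ ℝ) ∈
          {x : ZeroAtInftyContinuousMap ℕ ℝ | (Function.support fun n => x n).Finite} :=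
        c00.zero_mem
      simp [eindicator, h0S, L.zero_mem]
    · have hnot : ¬ (x ∈ {x : ZeroAtInftyContinuousMap ℕ ℝ |
          (Function.support fun n => x n).Finite} ∧
          x ∈ (L : Set (ZeroAtInftyContinuousMap ℕ ℝ))) := by
        rintro ⟨hS', hL'⟩
        refine hx ?_
        have hmem : x ∈ (L : Set (ZeroAtInftyContinuousMap ℕ ℝ)) ∩
            {x : ZeroAtInftyContinuousMap ℕ ℝ | (Function.support fun n => x n).Finite} :=
          ⟨hL', hS'⟩
        rw [hLc] at hmem
        exact hmem
      by_cases hS' : x ∈ {x : ZeroAtInftyContinuousMap ℕ ℝ |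
          (Function.support fun n => x n).Finite}
      · have hL' : x ∉ (L : Set (ZeroAtInftyContinuousMap ℕ ℝ)) := fun h => hnot ⟨hS', h⟩
        simp [eindicator, hS', hL', hx]
      · by_cases hL' : x ∈ (L : Set (ZeroAtInftyContinuousMap ℕ ℝ)) <;>
          simp [eindicator, hS', hL', hx]
  have h4 : fbiconj (fun x => eindicator {x : ZeroAtInftyContinuousMap ℕ ℝ |
        (Function.support fun n => x n).Finite} x +
        eindicator (L : Set (ZeroAtInftyContinuousMap ℕ ℝ)) x) =
      eindicator ({0} : Set (StrongDual ℝ (StrongDual ℝ (ZeroAtInftyContinuousMap ℕ ℝ)))) := by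
    rw [h3]
    funext z
    have hbot : ({0} : Set (ZeroAtInftyContinuousMap ℕ ℝ)) =
        ((⊥ : Submodule ℝ (ZeroAtInftyContinuousMap ℕ ℝ)) :
          Set (ZeroAtInftyContinuousMap ℕ ℝ)) := by simp
    rw [hbot, fbiconj_eindicator]
    have hc : (∀ p : StrongDual ℝ (ZeroAtInftyContinuousMap ℕ ℝ),
        (∀ x ∈ (⊥ : Submodule ℝ (ZeroAtInftyContinuousMap ℕ ℝ)), p x = 0) → z p = 0) ↔
        z ∈ ({0} : Set (StrongDual ℝ (StrongDual ℝ (ZeroAtInftyContinuousMap ℕ ℝ)))) := by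
      constructor
      · intro h
        rw [Set.mem_singleton_iff]
        ext p
        simp only [ContinuousLinearMap.zero_apply]
        refine h p ?_
        intro x hx
        rw [Submodule.mem_bot] at hx
        simp [hx]
      · intro h
        rw [Set.mem_singleton_iff] at h
        subst h
        intro p _
        simp
    simp only [eindicator]
    exact if_congr hc rfl rfl
  refine ⟨h1, h2, h3, h4, ?_⟩
  intro heq
  obtain ⟨x, hxL, hx0⟩ := Submodule.exists_mem_ne_zero_of_ne_bot hL
  set z := inclusionInDoubleDual ℝ (ZeroAtInftyContinuousMap ℕ ℝ) x with hzdef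
  have hz0 : z ≠ 0 := by
    intro h
    refine hx0 (eq_zero_of_forall_dual_eq_zero ℝ ?_)
    intro f
    have hzf : z f = 0 := by rw [h]; simp
    rwa [hzdef, dual_def] at hzf
  have hcongr := congrFun heq z
  rw [h4, h1, h2] at hcongr
  rw [show eindicator ({0} : Set (StrongDual ℝ (StrongDual ℝ (ZeroAtInftyContinuousMap ℕ ℝ)))) z = ⊤ from
    if_neg (by simpa using hz0)] at hcongr
  rw [show eindicator (Set.univ : Set (StrongDual ℝ (StrongDual ℝ (ZeroAtInftyContinuousMap ℕ ℝ)))) z = 0 from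
    if_pos (Set.mem_univ z)] at hcongr
  rw [show eindicator ((inclusionInDoubleDual ℝ (ZeroAtInftyContinuousMap ℕ ℝ)) ''
      (L : Set (ZeroAtInftyContinuousMap ℕ ℝ))) z = 0 from
    if_pos ⟨x, hxL, rfl⟩] at hcongr
  simp at hcongr
end
end

section
/- In the Banach space c_0 of real sequences converging to 0 (supremum norm), the following infimum computation holds: inf_{x = (x_k)_k ∈ c_0} ( sup_{k≥1} |x_k − 1| + ∑_{k≥1} 2^{−k} |x_k − 1| ) = 1. Equivalently, the infinite convex program in c_0 × ℝ with objective f_0(x,y) := y + ∑_{k≥1} 2^{−k}|x_k − 1| and constraints f_k(x,y) := |x_k − 1| − y ≤ 0 for all k ≥ 1 has optimal value 1. -/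
open Filter Topology

noncomputable section

/-- Auxiliary: the sequence equal to `1` up to `N` and `0` afterwards, as an element of `c₀`. -/
def xN (N : ℕ) : ZeroAtInftyContinuousMap ℕ ℝ where
  toFun := fun k => if k ≤ N then 1 else 0
  continuous_toFun := continuous_of_discreteTopology
  zero_at_infty' := by
    rw [cocompact_eq_atTop]
    have h : (fun _ : ℕ => (0 : ℝ)) =ᶠ[atTop] fun k => if k ≤ N then (1 : ℝ) else 0 := by
      filter_upwards [eventually_gt_atTop N] with k hk
      simp [hk.not_ge]
    exact tendsto_const_nhds.congr' h

lemma xN_apply (N k : ℕ) : xN N k = if k ≤ N then (1 : ℝ) else 0 := rfl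

lemma abs_xN_sub_one (N k : ℕ) : |xN N k - 1| = if k ≤ N then (0 : ℝ) else 1 := by
  rw [xN_apply]; split <;> simp

lemma tail_summable (N : ℕ) :
    Summable (fun k : ℕ => if k ≤ N then (0 : ℝ) else (2 : ℝ)⁻¹ ^ (k + 1)) := by
  apply Summable.of_nonneg_of_le (fun k => ?_) (fun k => ?_)
      (summable_geometric_of_lt_one (by norm_num) (by norm_num) :
        Summable fun k : ℕ => (2 : ℝ)⁻¹ ^ k)
  · split <;> positivity
  · split
    · positivity
    · exact pow_le_pow_of_le_one (by norm_num) (by norm_num) (Nat.le_succ k)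

lemma tail_tsum (N : ℕ) :
    ∑' k : ℕ, (if k ≤ N then (0 : ℝ) else (2 : ℝ)⁻¹ ^ (k + 1)) = (2 : ℝ)⁻¹ ^ (N + 1) := by
  have h := Summable.sum_add_tsum_nat_add (f := fun k : ℕ => if k ≤ N then (0 : ℝ) else (2 : ℝ)⁻¹ ^ (k + 1))
    (N + 1) (tail_summable N)
  have h1 : ∑ i ∈ Finset.range (N + 1),
      (if i ≤ N then (0 : ℝ) else (2 : ℝ)⁻¹ ^ (i + 1)) = 0 := by
    apply Finset.sum_eq_zero
    intro i hi
    rw [if_pos (Nat.lt_succ_iff.mp (Finset.mem_range.mp hi))]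
  have h2 : (fun i : ℕ => if i + (N + 1) ≤ N then (0 : ℝ) else (2 : ℝ)⁻¹ ^ (i + (N + 1) + 1))
      = fun i : ℕ => (2 : ℝ)⁻¹ ^ i * (2 : ℝ)⁻¹ ^ (N + 2) := by
    funext i
    rw [if_neg (by omega), ← pow_add]
    congr 1
  rw [← h, h1, zero_add, h2, tsum_mul_right, tsum_geometric_of_lt_one (by norm_num) (by norm_num),
    show N + 2 = (N + 1) + 1 from rfl, pow_succ,
    show ((1:ℝ) - 2⁻¹)⁻¹ = 2 by norm_num]
  ring

lemma tendsto_abs_sub_one (x : ZeroAtInftyContinuousMap ℕ ℝ) :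
    Tendsto (fun k => |x k - 1|) atTop (𝓝 1) := by
  have hx : Tendsto (fun k => x k) atTop (𝓝 0) := by
    have := zero_at_infty x
    rwa [cocompact_eq_atTop] at this
  have := (hx.sub (tendsto_const_nhds (x := (1 : ℝ)))).abs
  simpa using this

lemma one_le_sup (x : ZeroAtInftyContinuousMap ℕ ℝ) : 1 ≤ ⨆ k : ℕ, |x k - 1| := by
  have h1 := tendsto_abs_sub_one x
  have hbdd : BddAbove (Set.range fun k => |x k - 1|) := h1.bddAbove_range
  exact le_of_tendsto h1 (Eventually.of_forall fun k => le_ciSup hbdd k)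

lemma tsum_xN (N : ℕ) :
    ∑' k : ℕ, (2 : ℝ)⁻¹ ^ (k + 1) * |xN N k - 1| = (2 : ℝ)⁻¹ ^ (N + 1) := by
  rw [← tail_tsum N]
  congr 1
  funext k
  rw [abs_xN_sub_one]
  split <;> simp

lemma sup_xN_le (N : ℕ) : (⨆ k : ℕ, |xN N k - 1|) ≤ 1 := by
  apply ciSup_le
  intro k
  rw [abs_xN_sub_one]
  split <;> norm_num

/-- In the space `c₀` of real sequences converging to `0` (sup norm),
`inf_{x ∈ c₀} ( sup_k |x_k − 1| + ∑_k 2^{−k}|x_k − 1| ) = 1`; equivalently, the infinite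
convex program in `c₀ × ℝ` minimizing `y + ∑_k 2^{−k}|x_k − 1|` under the constraints
`|x_k − 1| − y ≤ 0` for all `k` has optimal value `1`. -/
theorem c0_program_value_eq_one :
    (⨅ x : ZeroAtInftyContinuousMap ℕ ℝ,
        ((⨆ k : ℕ, |x k - 1|) + ∑' k : ℕ, (2 : ℝ)⁻¹ ^ (k + 1) * |x k - 1|)) = 1 ∧
      (⨅ p : {q : ZeroAtInftyContinuousMap ℕ ℝ × ℝ // ∀ k : ℕ, |q.1 k - 1| - q.2 ≤ 0},
        ((p : ZeroAtInftyContinuousMap ℕ ℝ × ℝ).2 +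
          ∑' k : ℕ, (2 : ℝ)⁻¹ ^ (k + 1) * |(p : ZeroAtInftyContinuousMap ℕ ℝ × ℝ).1 k - 1|)) = 1 := by
  have htsum_nonneg : ∀ x : ZeroAtInftyContinuousMap ℕ ℝ,
      0 ≤ ∑' k : ℕ, (2 : ℝ)⁻¹ ^ (k + 1) * |x k - 1| := fun x =>
    tsum_nonneg fun k => by positivity
  -- choice of N given ε
  have hN : ∀ ε : ℝ, 0 < ε → ∃ N : ℕ, (2 : ℝ)⁻¹ ^ (N + 1) ≤ ε := by
    intro ε hε
    obtain ⟨n, hn⟩ := exists_pow_lt_of_lt_one hε (by norm_num : (2 : ℝ)⁻¹ < 1)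
    exact ⟨n, le_trans (pow_le_pow_of_le_one (by norm_num) (by norm_num) (Nat.le_succ n)) hn.le⟩
  constructor
  · -- first program
    have hlb : ∀ x : ZeroAtInftyContinuousMap ℕ ℝ,
        1 ≤ (⨆ k : ℕ, |x k - 1|) + ∑' k : ℕ, (2 : ℝ)⁻¹ ^ (k + 1) * |x k - 1| := fun x =>
      le_add_of_le_of_nonneg (one_le_sup x) (htsum_nonneg x)
    apply le_antisymm
    · apply le_of_forall_pos_le_add
      intro ε hε
      obtain ⟨N, hNε⟩ := hN ε hε
      refine le_trans (ciInf_le ⟨1, Set.forall_mem_range.mpr hlb⟩ (xN N)) ?_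
      rw [tsum_xN]
      exact add_le_add (sup_xN_le N) hNε
    · exact le_ciInf hlb
  · -- second program
    have hlb : ∀ p : {q : ZeroAtInftyContinuousMap ℕ ℝ × ℝ // ∀ k : ℕ, |q.1 k - 1| - q.2 ≤ 0},
        1 ≤ (p : ZeroAtInftyContinuousMap ℕ ℝ × ℝ).2 +
          ∑' k : ℕ, (2 : ℝ)⁻¹ ^ (k + 1) * |(p : ZeroAtInftyContinuousMap ℕ ℝ × ℝ).1 k - 1| := by
      rintro ⟨⟨x, y⟩, hcon⟩
      have h1 : 1 ≤ y := by
        refine le_of_tendsto (tendsto_abs_sub_one x) (Eventually.of_forall fun k => ?_)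
        have := hcon k
        simpa using sub_nonpos.mp this
      exact le_add_of_le_of_nonneg h1 (htsum_nonneg x)
    have hfeas : ∀ N : ℕ, ∀ k : ℕ, |(xN N, (1:ℝ)).1 k - 1| - (xN N, (1:ℝ)).2 ≤ 0 := by
      intro N k
      simp only [abs_xN_sub_one]
      split <;> norm_num
    haveI : Nonempty {q : ZeroAtInftyContinuousMap ℕ ℝ × ℝ // ∀ k : ℕ, |q.1 k - 1| - q.2 ≤ 0} :=
      ⟨⟨(xN 0, 1), hfeas 0⟩⟩
    apply le_antisymm
    · apply le_of_forall_pos_le_add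
      intro ε hε
      obtain ⟨N, hNε⟩ := hN ε hε
      refine le_trans (ciInf_le ⟨1, Set.forall_mem_range.mpr hlb⟩ ⟨(xN N, 1), hfeas N⟩) ?_
      simp only [tsum_xN]
      linarith
    · exact le_ciInf hlb

end
end

section
/- In ℓ_∞, the space of bounded real sequences with the supremum norm, one has inf_{z = (z_k)_k ∈ ℓ_∞} ( sup_{k≥1} |z_k − 1| + ∑_{k≥1} 2^{−k} |z_k − 1| ) = 0, whereas inf_{z ∈ ℓ_∞} ( max{ sup_{k≥1} |z_k − 1|, 1 } + ∑_{k≥1} 2^{−k} |z_k − 1| ) = 1. In particular the first infimum (the value of the biconjugate relaxation (P**) of the c_0-program with data f_0(x,y) = y + ∑_{k≥1} 2^{−k}|x_k − 1| and f_k(x,y) = |x_k − 1| − y) is strictly smaller than 1, the optimal value of that program over c_0, while the second infimum (the value of the reinforced relaxation (P_∞**)) equals it. -/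
open Filter Topology

noncomputable section

/-- In `ℓ∞` (bounded real sequences, sup norm):
`inf_{z ∈ ℓ∞} ( sup_k |z_k − 1| + ∑_k 2^{−k}|z_k − 1| ) = 0`, whereas
`inf_{z ∈ ℓ∞} ( max{sup_k |z_k − 1|, 1} + ∑_k 2^{−k}|z_k − 1| ) = 1`.
In particular the value of the biconjugate relaxation `(P**)` of the `c₀`-program is
strictly smaller than the optimal value `1` of that program over `c₀`, while the value
of the reinforced relaxation `(P_∞**)` equals it. -/
theorem linfty_relaxation_values :
    (⨅ z : lp (fun _ : ℕ => ℝ) ⊤,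
        ((⨆ k : ℕ, |z k - 1|) + ∑' k : ℕ, (2 : ℝ)⁻¹ ^ (k + 1) * |z k - 1|)) = 0 ∧
      (⨅ z : lp (fun _ : ℕ => ℝ) ⊤,
        (max (⨆ k : ℕ, |z k - 1|) 1 + ∑' k : ℕ, (2 : ℝ)⁻¹ ^ (k + 1) * |z k - 1|)) = 1 ∧
      (⨅ z : lp (fun _ : ℕ => ℝ) ⊤,
          ((⨆ k : ℕ, |z k - 1|) + ∑' k : ℕ, (2 : ℝ)⁻¹ ^ (k + 1) * |z k - 1|)) <
        ⨅ x : ZeroAtInftyContinuousMap ℕ ℝ,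
          ((⨆ k : ℕ, |x k - 1|) + ∑' k : ℕ, (2 : ℝ)⁻¹ ^ (k + 1) * |x k - 1|) := by
  -- the constant sequence 1 lies in ℓ∞
  have hone : Memℓp (fun _ : ℕ => (1 : ℝ)) ⊤ := by
    apply memℓp_infty
    refine ⟨1, ?_⟩
    rintro r ⟨k, rfl⟩
    simp
  set z₁ : lp (fun _ : ℕ => ℝ) ⊤ := ⟨fun _ => 1, hone⟩ with hz₁
  have hz₁k : ∀ k : ℕ, z₁ k = 1 := fun k => rfl
  haveI : Nonempty ↥(lp (fun _ : ℕ => ℝ) ⊤) := ⟨z₁⟩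
  -- value at z₁
  have hsup₁ : (⨆ k : ℕ, |z₁ k - 1|) = 0 := by
    simp [hz₁k]
  have htsum₁ : (∑' k : ℕ, (2 : ℝ)⁻¹ ^ (k + 1) * |z₁ k - 1|) = 0 := by
    simp [hz₁k]
  -- nonnegativity of both building blocks, for any z
  have hsup_nonneg : ∀ z : lp (fun _ : ℕ => ℝ) ⊤, (0 : ℝ) ≤ ⨆ k : ℕ, |z k - 1| :=
    fun z => Real.iSup_nonneg fun k => abs_nonneg _
  have htsum_nonneg : ∀ f : ℕ → ℝ, (0 : ℝ) ≤ ∑' k : ℕ, (2 : ℝ)⁻¹ ^ (k + 1) * |f k - 1| :=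
    fun f => tsum_nonneg fun k => mul_nonneg (by positivity) (abs_nonneg _)
  -- first infimum is 0
  have h1 : (⨅ z : lp (fun _ : ℕ => ℝ) ⊤,
      ((⨆ k : ℕ, |z k - 1|) + ∑' k : ℕ, (2 : ℝ)⁻¹ ^ (k + 1) * |z k - 1|)) = 0 := by
    apply le_antisymm
    · calc (⨅ z : lp (fun _ : ℕ => ℝ) ⊤,
          ((⨆ k : ℕ, |z k - 1|) + ∑' k : ℕ, (2 : ℝ)⁻¹ ^ (k + 1) * |z k - 1|))
          ≤ (⨆ k : ℕ, |z₁ k - 1|) + ∑' k : ℕ, (2 : ℝ)⁻¹ ^ (k + 1) * |z₁ k - 1| := by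
            apply ciInf_le
            refine ⟨0, ?_⟩
            rintro r ⟨z, rfl⟩
            exact add_nonneg (hsup_nonneg z) (htsum_nonneg _)
        _ = 0 := by rw [hsup₁, htsum₁]; ring
    · exact le_ciInf fun z => add_nonneg (hsup_nonneg z) (htsum_nonneg _)
  -- second infimum is 1
  have h2 : (⨅ z : lp (fun _ : ℕ => ℝ) ⊤,
      (max (⨆ k : ℕ, |z k - 1|) 1 + ∑' k : ℕ, (2 : ℝ)⁻¹ ^ (k + 1) * |z k - 1|)) = 1 := by
    apply le_antisymm
    · calc (⨅ z : lp (fun _ : ℕ => ℝ) ⊤,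
          (max (⨆ k : ℕ, |z k - 1|) 1 + ∑' k : ℕ, (2 : ℝ)⁻¹ ^ (k + 1) * |z k - 1|))
          ≤ max (⨆ k : ℕ, |z₁ k - 1|) 1 + ∑' k : ℕ, (2 : ℝ)⁻¹ ^ (k + 1) * |z₁ k - 1| := by
            apply ciInf_le
            refine ⟨0, ?_⟩
            rintro r ⟨z, rfl⟩
            have : (0 : ℝ) ≤ max (⨆ k : ℕ, |z k - 1|) 1 := le_trans zero_le_one (le_max_right _ _)
            exact add_nonneg this (htsum_nonneg _)
        _ = 1 := by rw [hsup₁, htsum₁]; simp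
    · refine le_ciInf fun z => ?_
      have : (1 : ℝ) ≤ max (⨆ k : ℕ, |z k - 1|) 1 := le_max_right _ _
      linarith [htsum_nonneg (fun k => z k)]
  -- for x ∈ c₀, the sup term is at least 1
  have hc0 : ∀ x : ZeroAtInftyContinuousMap ℕ ℝ, (1 : ℝ) ≤ ⨆ k : ℕ, |x k - 1| := by
    intro x
    have hbdd : BddAbove (Set.range fun k : ℕ => |x k - 1|) := by
      obtain ⟨C, hC⟩ := (x.toBCF.bddAbove_range_norm_comp)
      refine ⟨C + 1, ?_⟩
      rintro r ⟨k, rfl⟩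
      have : ‖x k‖ ≤ C := hC ⟨k, rfl⟩
      calc |x k - 1| ≤ |x k| + 1 := by
            have := abs_sub_abs_le_abs_sub (x k) 1
            have h2 := abs_sub (x k) (1 : ℝ)
            calc |x k - 1| ≤ |x k| + |(1 : ℝ)| := abs_sub _ _
              _ = |x k| + 1 := by norm_num
        _ ≤ C + 1 := by
            have : |x k| ≤ C := this
            linarith
    refine le_of_forall_pos_le_add fun ε hε => ?_
    have htend : Tendsto (fun k : ℕ => x k) atTop (𝓝 0) := by
      have := ZeroAtInftyContinuousMapClass.zero_at_infty x
      rwa [Filter.cocompact_eq_cofinite, Nat.cofinite_eq_atTop] at this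
    have : ∀ᶠ k : ℕ in atTop, |x k| < ε := by
      have := Metric.tendsto_nhds.mp htend ε hε
      filter_upwards [this] with k hk
      simpa [Real.dist_eq] using hk
    obtain ⟨k, hk⟩ := this.exists
    have h1 : 1 - ε ≤ |x k - 1| := by
      have := abs_sub_abs_le_abs_sub (1 : ℝ) (x k)
      have habs : |(1 : ℝ)| - |x k| ≤ |1 - x k| := this
      rw [abs_sub_comm] at habs
      simp only [abs_one] at habs
      linarith
    have h2 : |x k - 1| ≤ ⨆ j : ℕ, |x j - 1| := le_ciSup hbdd k
    linarith
  refine ⟨h1, h2, ?_⟩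
  rw [h1]
  have hlow : (1 : ℝ) ≤ ⨅ x : ZeroAtInftyContinuousMap ℕ ℝ,
      ((⨆ k : ℕ, |x k - 1|) + ∑' k : ℕ, (2 : ℝ)⁻¹ ^ (k + 1) * |x k - 1|) :=
    le_ciInf fun x => le_trans (hc0 x) (le_add_of_nonneg_right (htsum_nonneg _))
  linarith
end
end

section
/- Let Y be a nonreflexive real Banach space and X := Y*, so that X* = Y** and Y embeds canonically in X* via j : Y → Y**. Then there exists x_0* ∈ X* such that inf_{z ∈ X**} ( sup_{y ∈ B_Y} ⟨z, j(y)⟩ − ⟨z, x_0*⟩ ) < inf_{x ∈ X} ( ‖x‖_X − ⟨x_0*, x⟩ ), where B_Y is the closed unit ball of Y. Equivalently: if σ_{B_Y}(z) := sup_{y ∈ B_Y} ⟨z, j(y)⟩ coincides with ‖z‖_{X**} for every z ∈ X**, then Y (and hence X) is reflexive. In particular, every nonreflexive dual Banach space X carries a linear program with infinitely many constraints, (P_{x_0*}): inf (u − ⟨x_0*, x⟩) subject to ⟨x, j(y)⟩ − u ≤ 0 for all y ∈ B_Y, (x,u) ∈ X × ℝ, exhibiting a strict gap with its biconjugate relaxation,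 even though the supremum of the constraint functions is continuous and the Slater condition holds. -/
open Filter Topology NormedSpace

noncomputable section

/-- Separation from a closed subspace: a functional vanishing on the subspace, positive at `p`. -/
lemma aux_separate {E : Type*} [NormedAddCommGroup E] [NormedSpace ℝ E]
    (S : Submodule ℝ E) (hS : IsClosed (S : Set E)) {p : E} (hp : p ∉ S) :
    ∃ f : E →L[ℝ] ℝ, (∀ a ∈ S, f a = 0) ∧ 0 < f p := by
  obtain ⟨f, u, hfu, hup⟩ := geometric_hahn_banach_closed_point S.convex hS hp
  have h0 : (0:ℝ) < u := by simpa using hfu 0 S.zero_mem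
  have hvanish : ∀ a ∈ S, f a = 0 := by
    intro a ha
    by_contra h
    rcases exists_nat_gt (u / f a) with ⟨n, hn⟩
    rcases exists_nat_gt (u / (- f a)) with ⟨m, hm⟩
    rcases lt_or_gt_of_ne h with hneg | hpos
    · have := hfu ((-(m:ℝ)) • a) (S.smul_mem _ ha)
      rw [map_smul] at this
      have : (m:ℝ) * (- f a) < u := by simpa [neg_mul, mul_comm] using this
      have := (div_lt_iff₀ (by linarith)).mp hm
      linarith [mul_comm (u / (- f a)) (- f a)]
    · have := hfu ((n:ℝ) • a) (S.smul_mem _ ha)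
      rw [map_smul] at this
      have h2 : (n:ℝ) * f a < u := by simpa [smul_eq_mul] using this
      have := (div_lt_iff₀ hpos).mp hn
      linarith
  exact ⟨f, hvanish, by linarith⟩

/-- (A gap in every nonreflexive dual space.) Let `Y` be a nonreflexive
real Banach space (the canonical embedding `j : Y → Y**` is not surjective) and
`X := Y*`. Then there exists `x₀* ∈ X*` such that
`inf_{z ∈ X**} ( sup_{y ∈ B_Y} ⟨z, j y⟩ − ⟨z, x₀*⟩ ) < inf_{x ∈ X} ( ‖x‖ − ⟨x₀*, x⟩ )`;
that is, the linear program `(P_{x₀*})` with infinitely many constraints indexed by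
`B_Y` exhibits a strict gap with its biconjugate relaxation. -/
theorem nonreflexive_dual_biconjugate_gap
    (Y : Type*) [NormedAddCommGroup Y] [NormedSpace ℝ Y] [CompleteSpace Y]
    (hY : ¬ Function.Surjective (inclusionInDoubleDual ℝ Y)) :
    ∃ p₀ : StrongDual ℝ (StrongDual ℝ Y),
      (⨅ z : StrongDual ℝ (StrongDual ℝ (StrongDual ℝ Y)),
          ((⨆ y ∈ Metric.closedBall (0 : Y) 1,
              ((z ((inclusionInDoubleDual ℝ Y) y) : ℝ) : EReal)) - (z p₀ : EReal))) <
        ⨅ x : StrongDual ℝ Y, ((‖x‖ : EReal) - (p₀ x : EReal)) := by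
  classical
  set j := inclusionInDoubleDual ℝ Y with hj
  -- pick p outside the range of j
  obtain ⟨p, hp'⟩ := not_forall.mp hY
  have hp : ∀ y, j y ≠ p := fun y hy => hp' ⟨y, hy⟩
  have hpne : p ≠ 0 := by
    intro h; exact hp 0 (by simp [h])
  have hnorm : ‖p‖ ≠ 0 := fun h => hpne ((norm_eq_zero (E := StrongDual ℝ (StrongDual ℝ Y))).mp h)
  -- range of j as a closed submodule
  set S : Submodule ℝ (StrongDual ℝ (StrongDual ℝ Y)) := LinearMap.range (j : Y →ₗ[ℝ] StrongDual ℝ (StrongDual ℝ Y))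
  have hSrange : (S : Set (StrongDual ℝ (StrongDual ℝ Y))) = Set.range j := by
    ext x; simp [S, LinearMap.mem_range]
  have hSclosed : IsClosed (S : Set (StrongDual ℝ (StrongDual ℝ Y))) := by
    rw [hSrange]
    have hiso : Isometry j := (inclusionInDoubleDualLi ℝ (E := Y)).isometry
    exact hiso.isUniformInducing.isComplete_range.isClosed
  -- normalize p
  set p₀ : StrongDual ℝ (StrongDual ℝ Y) := ‖p‖⁻¹ • p with hp₀
  have hp₀norm : ‖p₀‖ = 1 := by
    rw [hp₀]
    have h := (NormedSpace.toNormSMulClass (𝕜 := ℝ) (E := StrongDual ℝ (StrongDual ℝ Y))).norm_smul ‖p‖⁻¹ p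
    rw [norm_inv, Real.norm_of_nonneg (norm_nonneg p)] at h
    exact h.trans (inv_mul_cancel₀ hnorm)
  have hp₀nmem : p₀ ∉ S := by
    intro h
    have : p ∈ S := by
      have := S.smul_mem ‖p‖ h
      rwa [hp₀, smul_smul, mul_inv_cancel₀ hnorm, one_smul] at this
    rw [← SetLike.mem_coe, hSrange] at this
    obtain ⟨y, hy⟩ := this
    exact hp y hy
  obtain ⟨f, hfS, hfp⟩ := aux_separate (E := StrongDual ℝ (StrongDual ℝ Y)) S hSclosed hp₀nmem
  -- the separating functional, scaled so that z p₀ = 1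
  set z : StrongDual ℝ (StrongDual ℝ (StrongDual ℝ Y)) := (f p₀)⁻¹ • f with hz
  have hzS : ∀ y : Y, z (j y) = 0 := by
    intro y
    have : f (j y) = 0 := hfS _ ⟨y, rfl⟩
    simp [hz, this]
  have hzp₀ : z p₀ = 1 := by
    simp [hz, inv_mul_cancel₀ (ne_of_gt hfp)]
  refine ⟨p₀, ?_⟩
  have hsup : (⨆ y ∈ Metric.closedBall (0 : Y) 1, ((z (j y) : ℝ) : EReal)) = (0 : EReal) := by
    have : ∀ y : Y, ((z (j y) : ℝ) : EReal) = (0 : EReal) := fun y => by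
      rw [hzS y]; norm_num
    simp only [this]
    apply le_antisymm
    · exact iSup_le fun y => iSup_le fun _ => le_refl _
    · refine le_trans ?_ (le_iSup _ (0 : Y))
      simp
  have hLHS : (⨅ z' : StrongDual ℝ (StrongDual ℝ (StrongDual ℝ Y)),
      ((⨆ y ∈ Metric.closedBall (0 : Y) 1, ((z' (j y) : ℝ) : EReal)) - (z' p₀ : EReal)))
      ≤ ((-1 : ℝ) : EReal) := by
    refine le_trans (iInf_le _ z) ?_
    rw [hsup, hzp₀]
    rw [show ((0:EReal) - ((1:ℝ):EReal)) = ((-1:ℝ):EReal) by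
      rw [← EReal.coe_zero, ← EReal.coe_sub]; norm_num]
  have hRHS : ((0 : ℝ) : EReal) ≤ ⨅ x : StrongDual ℝ Y, ((‖x‖ : EReal) - (p₀ x : EReal)) := by
    refine le_iInf fun x => ?_
    rw [← EReal.coe_sub, EReal.coe_le_coe_iff]
    have hx : p₀ x ≤ ‖x‖ := by
      calc p₀ x ≤ ‖p₀ x‖ := le_abs_self _
        _ ≤ ‖p₀‖ * ‖x‖ := p₀.le_opNorm x
        _ = ‖x‖ := by rw [hp₀norm, one_mul]
    linarith
  calc (⨅ z' : StrongDual ℝ (StrongDual ℝ (StrongDual ℝ Y)),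
      ((⨆ y ∈ Metric.closedBall (0 : Y) 1, ((z' (j y) : ℝ) : EReal)) - (z' p₀ : EReal)))
      ≤ ((-1 : ℝ) : EReal) := hLHS
    _ < ((0 : ℝ) : EReal) := by exact_mod_cast (by norm_num : (-1:ℝ) < 0)
    _ ≤ _ := hRHS
end
end

section
/- Let T be a compact topological space and {f_t : t ∈ T} a concave-like family of proper convex lower semicontinuous functions on X, set f := sup_{t ∈ T} f_t, and assume dom f ≠ ∅ and that for every x ∈ dom f the map t ↦ f_t(x) is upper semicontinuous on T. Let f_0 : X → ℝ ∪ {+∞} be proper convex, and suppose the problem (P): inf f_0(x) subject to f_t(x) ≤ 0 for all t ∈ T, x ∈ X, has finite optimal value v(P) ∈ ℝ and satisfies the Slater condition (there exists x_0 ∈ dom f_0 with sup_{t∈T} f_t(x_0) < 0). Then v(P) = max_{t ∈ T, λ ≥ 0} inf_{x ∈ dom f} ( f_0(x) + λ f_t(x) ), the maximum over (t, λ) ∈ T × [0, +∞) being attained. -/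
open Filter Topology Set NormedSpace
open scoped Classical

noncomputable section

variable {X : Type*} [NormedAddCommGroup X] [NormedSpace ℝ X]

/-- A family `{f_t : t ∈ T}` is concave-like if every (finite) nonnegative combination of
members of the family is dominated by a multiple of a member, with the convention
`0·(+∞) = +∞`. -/
def ConcaveLike {X : Type*} [NormedAddCommGroup X] [NormedSpace ℝ X]
    {T : Type*} (f : T → X → EReal) : Prop :=
  ∀ (m : ℕ) (t : Fin m → T) (lam : Fin m → ℝ), (∀ k, 0 ≤ lam k) →
    ∃ t₀ : T, ∀ x : X,
      (∑ k, smulInf (lam k) (f (t k) x)) ≤ smulInf (∑ k, lam k) (f t₀ x)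

set_option linter.unusedSectionVars false

namespace DualityJensenAux

lemma combo {g : X → EReal} (hg : ConvexER g) {x y : X} {p q a b : ℝ}
    (hx : g x ≠ ⊥) (hy : g y ≠ ⊥) (hxp : g x ≤ (p : EReal)) (hyq : g y ≤ (q : EReal))
    (ha : 0 ≤ a) (hb : 0 ≤ b) (hab : a + b = 1) :
    g (a • x + b • y) ≤ ((a * p + b * q : ℝ) : EReal) := by
  have hxt : g x ≠ ⊤ := ne_top_of_le_ne_top (EReal.coe_ne_top p) hxp
  have hyt : g y ≠ ⊤ := ne_top_of_le_ne_top (EReal.coe_ne_top q) hyq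
  have hgx := (EReal.coe_toReal hxt hx).symm
  have hgy := (EReal.coe_toReal hyt hy).symm
  have h1 := hg x y a b ha hb hab
  rw [hgx, hgy] at h1
  have h2 : ((a : EReal) * ((g x).toReal : EReal) + (b : EReal) * ((g y).toReal : EReal))
      = ((a * (g x).toReal + b * (g y).toReal : ℝ) : EReal) := by
    rw [← EReal.coe_mul, ← EReal.coe_mul, ← EReal.coe_add]
  rw [h2] at h1
  refine h1.trans ?_
  have hxp' : (g x).toReal ≤ p := by
    rw [hgx] at hxp; exact EReal.coe_le_coe_iff.1 hxp
  have hyq' : (g y).toReal ≤ q := by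
    rw [hgy] at hyq; exact EReal.coe_le_coe_iff.1 hyq
  exact EReal.coe_le_coe_iff.2 (by nlinarith)

lemma convex_edom {g : X → EReal} (hg : ConvexER g) (hb : ∀ x, g x ≠ ⊥) :
    Convex ℝ (edom g) := by
  intro x hx y hy a b ha hb' hab
  have := combo hg (hb x) (hb y) (le_of_eq (EReal.coe_toReal hx (hb x)).symm)
    (le_of_eq (EReal.coe_toReal hy (hb y)).symm) ha hb' hab
  exact ne_top_of_le_ne_top (EReal.coe_ne_top _) this

lemma convexOn_toReal {g : X → EReal} (hg : ConvexER g) (hb : ∀ x, g x ≠ ⊥) :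
    ConvexOn ℝ (edom g) (fun x => (g x).toReal) := by
  refine ⟨convex_edom hg hb, ?_⟩
  intro x hx y hy a b ha hb' hab
  have h := combo hg (hb x) (hb y) (le_of_eq (EReal.coe_toReal hx (hb x)).symm)
    (le_of_eq (EReal.coe_toReal hy (hb y)).symm) ha hb' hab
  have := EReal.toReal_le_toReal h (hb _) (EReal.coe_ne_top _)
  rw [EReal.toReal_coe] at this
  simpa [smul_eq_mul] using this

lemma jensen {g : X → EReal} (hg : ConvexER g) (hb : ∀ x, g x ≠ ⊥)
    {ι : Type*} (s : Finset ι) (w : ι → ℝ) (z : ι → X) (r : ι → ℝ)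
    (hw : ∀ i ∈ s, 0 ≤ w i) (h1 : ∑ i ∈ s, w i = 1)
    (hr : ∀ i ∈ s, g (z i) ≤ ((r i : ℝ) : EReal)) :
    g (∑ i ∈ s, w i • z i) ≤ ((∑ i ∈ s, w i * r i : ℝ) : EReal) := by
  have hmem : ∀ i ∈ s, z i ∈ edom g := fun i hi =>
    ne_top_of_le_ne_top (EReal.coe_ne_top _) (hr i hi)
  have hcm : (∑ i ∈ s, w i • z i) ∈ edom g :=
    (convex_edom hg hb).sum_mem hw h1 hmem
  have h2 := (convexOn_toReal hg hb).map_sum_le hw h1 hmem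
  have h3 : (g (∑ i ∈ s, w i • z i)).toReal ≤ ∑ i ∈ s, w i * r i := by
    refine h2.trans (Finset.sum_le_sum fun i hi => ?_)
    have : (g (z i)).toReal ≤ r i := by
      have := EReal.toReal_le_toReal (hr i hi) (hb _) (EReal.coe_ne_top _)
      simpa using this
    have := mul_le_mul_of_nonneg_left this (hw i hi)
    simpa [smul_eq_mul] using this
  calc g (∑ i ∈ s, w i • z i) = (((g (∑ i ∈ s, w i • z i)).toReal : ℝ) : EReal) :=
        (EReal.coe_toReal hcm (hb _)).symm
    _ ≤ _ := EReal.coe_le_coe_iff.2 h3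

end DualityJensenAux

section Mu
variable {T : Type*} [Nonempty T]

lemma dAux_sup_ne_bot (f : T → X → EReal) (hfp : ∀ t, ProperER (f t)) (x : X) :
    (⨆ t, f t x) ≠ ⊥ := by
  obtain ⟨t⟩ := ‹Nonempty T›
  intro h
  exact (hfp t).2 x (eq_bot_iff.2 (h ▸ le_iSup (fun t => f t x) t))

lemma dAux_ftx_ne_top {f : T → X → EReal} {x : X} (hx : (⨆ t, f t x) ≠ ⊤) (t : T) :
    f t x ≠ ⊤ :=
  ne_top_of_le_ne_top hx (le_iSup (fun t => f t x) t)

lemma dAux_ftx_le_coe {f : T → X → EReal} (hfp : ∀ t, ProperER (f t)) {x : X}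
    (hx : (⨆ t, f t x) ≠ ⊤) (t : T) :
    f t x ≤ (((⨆ t, f t x).toReal : ℝ) : EReal) := by
  rw [EReal.coe_toReal hx (dAux_sup_ne_bot f hfp x)]
  exact le_iSup (fun t => f t x) t

lemma dAux_exists_mu (f : T → X → EReal) (hfp : ∀ t, ProperER (f t)) (hfc : ∀ t, ConvexER (f t))
    (f₀ : X → EReal) (hf₀p : ProperER f₀) (hf₀c : ConvexER f₀)
    (v : ℝ) (hv : (⨅ x ∈ {x : X | ∀ t, f t x ≤ 0}, f₀ x) = (v : EReal))
    (hslater : ∃ x₀, f₀ x₀ ≠ ⊤ ∧ (⨆ t, f t x₀) < 0) :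
    ∃ μ : ℝ, 0 ≤ μ ∧ ∀ x, (⨆ t, f t x) ≠ ⊤ →
      (v : EReal) ≤ f₀ x + ((μ : ℝ) : EReal) * (⨆ t, f t x) := by
  classical
  obtain ⟨x₀, hx₀t, hx₀n⟩ := hslater
  -- basic facts about x₀
  have hsup₀t : (⨆ t, f t x₀) ≠ ⊤ := fun h => by simp [h] at hx₀n
  have hsup₀b : (⨆ t, f t x₀) ≠ ⊥ := dAux_sup_ne_bot f hfp x₀
  set d : ℝ := (⨆ t, f t x₀).toReal with hd
  have hsup₀ : (⨆ t, f t x₀) = (d : EReal) := (EReal.coe_toReal hsup₀t hsup₀b).symm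
  have hdneg : d < 0 := by
    rw [hsup₀] at hx₀n; exact_mod_cast hx₀n
  set δ : ℝ := -d with hδ
  have hδpos : 0 < δ := by simp [hδ]; linarith
  set c : ℝ := (f₀ x₀).toReal with hc
  have hf₀x₀ : f₀ x₀ = (c : EReal) := (EReal.coe_toReal hx₀t (hf₀p.2 x₀)).symm
  -- the feasibility + value inequality: for any x with all f t x ≤ 0, v ≤ f₀ x
  have hfeas : ∀ y : X, (∀ t, f t y ≤ 0) → (v : EReal) ≤ f₀ y := by
    intro y hy
    calc (v : EReal) = ⨅ x ∈ {x : X | ∀ t, f t x ≤ 0}, f₀ x := hv.symm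
      _ ≤ f₀ y := iInf₂_le y hy
  -- the set of slopes
  set S : Set ℝ := {u | ∃ x, (⨆ t, f t x) ≠ ⊤ ∧ f₀ x ≠ ⊤ ∧
      0 < (⨆ t, f t x).toReal ∧ u = (v - (f₀ x).toReal) / (⨆ t, f t x).toReal} with hS
  -- key convexity computation: combining a point x (with data a = f₀ x, s = sup f x)
  -- with a point x' (a', s') where s' > 0 ≥ s... we do two versions.
  -- generic: given x1 with (s1 ≤ 0 side) weight computations; we inline below.
  -- Bound for S:
  have hSbdd : ∀ u ∈ S, u ≤ (c - v) / δ := by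
    rintro u ⟨x, hxt, hxft, hxs, rfl⟩
    set s : ℝ := (⨆ t, f t x).toReal with hs
    set a : ℝ := (f₀ x).toReal with ha
    have hfx : f₀ x = (a : EReal) := (EReal.coe_toReal hxft (hf₀p.2 x)).symm
    have hl1 : (0:ℝ) ≤ s / (s + δ) := by positivity
    have hl2 : (0:ℝ) ≤ δ / (s + δ) := by positivity
    have hl3 : s / (s + δ) + δ / (s + δ) = 1 := by
      field_simp
    set y : X := (s / (s + δ)) • x₀ + (δ / (s + δ)) • x with hy
    have hyfeas : ∀ t, f t y ≤ 0 := by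
      intro t
      have := DualityJensenAux.combo (hfc t) ((hfp t).2 x₀) ((hfp t).2 x)
        ((le_iSup (fun t => f t x₀) t).trans hsup₀.le) (dAux_ftx_le_coe hfp hxt t) hl1 hl2 hl3
      refine this.trans ?_
      rw [show ((0:EReal) = ((0:ℝ) : EReal)) from rfl]
      refine EReal.coe_le_coe_iff.2 ?_
      rw [← hs]
      have : s / (s + δ) * d + δ / (s + δ) * s = 0 := by
        field_simp [hδ]; ring
      linarith [this.le]
    have hvle : (v : EReal) ≤ f₀ y := hfeas y hyfeas
    have hf₀y := DualityJensenAux.combo hf₀c (hf₀p.2 x₀) (hf₀p.2 x)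
      (le_of_eq hf₀x₀) (le_of_eq hfx) hl1 hl2 hl3
    have : (v : EReal) ≤ ((s / (s + δ) * c + δ / (s + δ) * a : ℝ) : EReal) :=
      hvle.trans hf₀y
    have hre : v ≤ s / (s + δ) * c + δ / (s + δ) * a := EReal.coe_le_coe_iff.1 this
    have hsδ : 0 < s + δ := by linarith
    rw [div_le_div_iff₀ hxs hδpos]
    have h' : v * (s + δ) ≤ s * c + δ * a := by
      have := mul_le_mul_of_nonneg_right hre hsδ.le
      calc v * (s + δ) ≤ (s / (s + δ) * c + δ / (s + δ) * a) * (s + δ) := this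
        _ = s * c + δ * a := by field_simp; try ring
    nlinarith
  have hSbddAbove : BddAbove S := ⟨(c - v) / δ, fun u hu => hSbdd u hu⟩
  refine ⟨max 0 (sSup S), le_max_left _ _, ?_⟩
  set μ : ℝ := max 0 (sSup S) with hμ
  intro x hxt
  set s : ℝ := (⨆ t, f t x).toReal with hs
  have hsupx : (⨆ t, f t x) = (s : EReal) := (EReal.coe_toReal hxt (dAux_sup_ne_bot f hfp x)).symm
  rw [hsupx, ← EReal.coe_mul]
  by_cases hxft : f₀ x = ⊤
  · rw [hxft, EReal.top_add_coe]; exact le_top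
  set a : ℝ := (f₀ x).toReal with ha
  have hfx : f₀ x = (a : EReal) := (EReal.coe_toReal hxft (hf₀p.2 x)).symm
  rw [hfx, ← EReal.coe_add]
  refine EReal.coe_le_coe_iff.2 ?_
  -- now a real inequality: v ≤ a + μ * s
  rcases lt_trichotomy s 0 with hsneg | hszero | hspos
  · -- x is strictly feasible; need μ ≤ (a - v) / (-s)
    have hxfeas : ∀ t, f t x ≤ 0 := by
      intro t
      refine (dAux_ftx_le_coe hfp hxt t).trans ?_
      rw [show ((0:EReal) = ((0:ℝ) : EReal)) from rfl]
      exact EReal.coe_le_coe_iff.2 (by rw [← hs]; linarith)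
    have hav : v ≤ a := by
      have := hfeas x hxfeas
      rw [hfx] at this; exact EReal.coe_le_coe_iff.1 this
    have hμle : μ ≤ (a - v) / (-s) := by
      refine max_le (div_nonneg (by linarith) (by linarith)) (Real.sSup_le ?_ (div_nonneg (by linarith) (by linarith)))
      rintro u ⟨x', hx't, hx'ft, hx's, rfl⟩
      set s' : ℝ := (⨆ t, f t x').toReal with hs'
      set a' : ℝ := (f₀ x').toReal with ha'
      have hfx' : f₀ x' = (a' : EReal) := (EReal.coe_toReal hx'ft (hf₀p.2 x')).symm
      -- combine x and x' with weights s'/(s'-s), (-s)/(s'-s)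
      have hden : 0 < s' - s := by linarith
      have hl1 : (0:ℝ) ≤ s' / (s' - s) := div_nonneg hx's.le hden.le
      have hl2 : (0:ℝ) ≤ (-s) / (s' - s) := div_nonneg (by linarith) hden.le
      have hl3 : s' / (s' - s) + (-s) / (s' - s) = 1 := by field_simp; ring
      set z : X := (s' / (s' - s)) • x + ((-s) / (s' - s)) • x' with hz
      have hzfeas : ∀ t, f t z ≤ 0 := by
        intro t
        have := DualityJensenAux.combo (hfc t) ((hfp t).2 x) ((hfp t).2 x')
          (dAux_ftx_le_coe hfp hxt t) (dAux_ftx_le_coe hfp hx't t) hl1 hl2 hl3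
        refine this.trans ?_
        rw [show ((0:EReal) = ((0:ℝ) : EReal)) from rfl]
        refine EReal.coe_le_coe_iff.2 ?_
        rw [← hs, ← hs']
        have : s' / (s' - s) * s + (-s) / (s' - s) * s' = 0 := by
          field_simp; ring
        linarith [this.le]
      have hvz : (v : EReal) ≤ f₀ z := hfeas z hzfeas
      have hf₀z := DualityJensenAux.combo hf₀c (hf₀p.2 x) (hf₀p.2 x')
        (le_of_eq hfx) (le_of_eq hfx') hl1 hl2 hl3
      have hre : v ≤ s' / (s' - s) * a + (-s) / (s' - s) * a' :=
        EReal.coe_le_coe_iff.1 (hvz.trans hf₀z)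
      rw [div_le_div_iff₀ hx's (by linarith : (0:ℝ) < -s)]
      have h' : v * (s' - s) ≤ s' * a + (-s) * a' := by
        have := mul_le_mul_of_nonneg_right hre hden.le
        calc v * (s' - s) ≤ (s' / (s' - s) * a + (-s) / (s' - s) * a') * (s' - s) := this
          _ = s' * a + (-s) * a' := by field_simp; try ring
      nlinarith
    have : μ * (-s) ≤ a - v := by
      have := mul_le_mul_of_nonneg_right hμle (by linarith : (0:ℝ) ≤ -s)
      calc μ * (-s) ≤ (a - v) / (-s) * (-s) := this
        _ = a - v := div_mul_cancel₀ _ (by linarith : (-s : ℝ) ≠ 0)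
    linarith
  · -- s = 0 : x feasible, v ≤ a
    have hxfeas : ∀ t, f t x ≤ 0 := by
      intro t
      refine (dAux_ftx_le_coe hfp hxt t).trans ?_
      rw [show ((0:EReal) = ((0:ℝ) : EReal)) from rfl]
      exact EReal.coe_le_coe_iff.2 (by rw [← hs]; linarith)
    have hav : v ≤ a := by
      have := hfeas x hxfeas
      rw [hfx] at this; exact EReal.coe_le_coe_iff.1 this
    rw [hszero]; linarith
  · -- s > 0 : use membership in S
    have hmem : (v - a) / s ∈ S := ⟨x, hxt, hxft, by rw [← hs]; exact hspos, by rw [← hs, ← ha]⟩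
    have : (v - a) / s ≤ μ := le_trans (le_csSup hSbddAbove hmem) (le_max_right _ _)
    have := mul_le_mul_of_nonneg_right this hspos.le
    rw [div_mul_cancel₀ _ hspos.ne'] at this
    linarith

end Mu

section Fan
variable {T : Type*} [TopologicalSpace T] [CompactSpace T] [Nonempty T]


set_option maxHeartbeats 1000000 in
lemma dAux_fan (f : T → X → EReal) (hfp : ∀ t, ProperER (f t)) (hfc : ∀ t, ConvexER (f t))
    (hconc : ConcaveLike f)
    (husc : ∀ x : X, (⨆ t, f t x) ≠ ⊤ → UpperSemicontinuous (fun t => f t x))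
    (f₀ : X → EReal) (hf₀p : ProperER f₀) (hf₀c : ConvexER f₀)
    (v μ : ℝ) (hμ : 0 < μ)
    (hkey : ∀ x, (⨆ t, f t x) ≠ ⊤ → (v : EReal) ≤ f₀ x + ((μ : ℝ) : EReal) * (⨆ t, f t x)) :
    ∃ t₀ : T, ∀ x, (⨆ t, f t x) ≠ ⊤ → (v : EReal) ≤ f₀ x + ((μ : ℝ) : EReal) * f t₀ x := by
  classical
  by_contra hcon
  push_neg at hcon
  -- index type for the open cover
  set ι : Type _ := {x : X // (⨆ t, f t x) ≠ ⊤ ∧ f₀ x ≠ ⊤} with hι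
  set U : ι → Set T := fun i =>
    (fun t => f t i.1) ⁻¹' Iio (((v - (f₀ i.1).toReal) / μ : ℝ) : EReal) with hU
  have hUopen : ∀ i, IsOpen (U i) := fun i =>
    upperSemicontinuous_iff_isOpen_preimage.1 (husc i.1 i.2.1) _
  have hcover : ∀ t : T, ∃ i : ι, t ∈ U i := by
    intro t
    obtain ⟨x, hxD, hlt⟩ := hcon t
    have hbtop : f t x ≠ ⊤ := dAux_ftx_ne_top hxD t
    have hbbot : f t x ≠ ⊥ := (hfp t).2 x
    have hfb : f t x = (((f t x).toReal : ℝ) : EReal) := (EReal.coe_toReal hbtop hbbot).symm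
    have hxft : f₀ x ≠ ⊤ := by
      intro h
      rw [h, hfb, ← EReal.coe_mul, EReal.top_add_coe] at hlt
      exact not_top_lt hlt
    have hfa : f₀ x = (((f₀ x).toReal : ℝ) : EReal) := (EReal.coe_toReal hxft (hf₀p.2 x)).symm
    rw [hfa, hfb, ← EReal.coe_mul, ← EReal.coe_add] at hlt
    have hre := EReal.coe_lt_coe_iff.1 hlt
    refine ⟨⟨x, hxD, hxft⟩, ?_⟩
    show f t x < _
    rw [hfb]
    exact EReal.coe_lt_coe_iff.2 (by rw [lt_div_iff₀ hμ]; linarith)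
  obtain ⟨sfin, hsub⟩ := isCompact_univ.elim_finite_subcover U hUopen
    (fun t _ => mem_iUnion.2 (hcover t))
  have hsne : sfin.Nonempty := by
    obtain ⟨t⟩ := ‹Nonempty T›
    obtain ⟨i, hi, _⟩ := mem_iUnion₂.1 (hsub (mem_univ t))
    exact ⟨i, hi⟩
  set m : ℕ := sfin.card with hm
  set pts : Fin m → X := fun k => ((sfin.equivFin.symm k : ι) : X) with hpts
  have hptsD : ∀ k, (⨆ t, f t (pts k)) ≠ ⊤ := fun k => (sfin.equivFin.symm k).1.2.1
  have hptsf₀ : ∀ k, f₀ (pts k) ≠ ⊤ := fun k => (sfin.equivFin.symm k).1.2.2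
  set a : Fin m → ℝ := fun k => (f₀ (pts k)).toReal with ha
  set b : T → Fin m → ℝ := fun t k => (f t (pts k)).toReal with hb
  have hfb : ∀ t k, f t (pts k) = ((b t k : ℝ) : EReal) :=
    fun t k => (EReal.coe_toReal (dAux_ftx_ne_top (hptsD k) t) ((hfp t).2 _)).symm
  have hf₀a : ∀ k, f₀ (pts k) = ((a k : ℝ) : EReal) :=
    fun k => (EReal.coe_toReal (hptsf₀ k) (hf₀p.2 _)).symm
  have hcov2 : ∀ t : T, ∃ k, b t k < (v - a k) / μ := by
    intro t
    obtain ⟨i, hi, hti⟩ := mem_iUnion₂.1 (hsub (mem_univ t))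
    refine ⟨sfin.equivFin ⟨i, hi⟩, ?_⟩
    have hpk : pts (sfin.equivFin ⟨i, hi⟩) = (i : X) := by
      simp [hpts]
    have hti' : f t (i : X) < (((v - (f₀ (i : X)).toReal) / μ : ℝ) : EReal) := hti
    rw [← hpk] at hti'
    rw [hfb t _] at hti'
    have := EReal.coe_lt_coe_iff.1 hti'
    simpa [ha] using this
  -- second compactness argument: uniform gap
  set V : ℕ → Set T := fun n => ⋃ k, (fun t => f t (pts k)) ⁻¹'
      Iio (((v - 1 / (n + 1) - a k) / μ : ℝ) : EReal) with hV
  have hVopen : ∀ n, IsOpen (V n) := fun n => isOpen_iUnion fun k =>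
    upperSemicontinuous_iff_isOpen_preimage.1 (husc (pts k) (hptsD k)) _
  have hVcov : ∀ t : T, ∃ n : ℕ, t ∈ V n := by
    intro t
    obtain ⟨k, hk⟩ := hcov2 t
    have hgap : 0 < μ * ((v - a k) / μ - b t k) := by
      apply mul_pos hμ; linarith
    obtain ⟨n, hn⟩ := exists_nat_one_div_lt hgap
    refine ⟨n, mem_iUnion.2 ⟨k, ?_⟩⟩
    show f t (pts k) < _
    rw [hfb t k]
    refine EReal.coe_lt_coe_iff.2 ?_
    rw [lt_div_iff₀ hμ]
    have hμeq : μ * ((v - a k) / μ - b t k) = v - a k - μ * b t k := by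
      field_simp
    rw [hμeq] at hn
    push_cast at hn ⊢
    linarith
  obtain ⟨F, hF⟩ := isCompact_univ.elim_finite_subcover V hVopen
    (fun t _ => mem_iUnion.2 (hVcov t))
  have hFne : F.Nonempty := by
    obtain ⟨t⟩ := ‹Nonempty T›
    obtain ⟨n, hn, _⟩ := mem_iUnion₂.1 (hF (mem_univ t))
    exact ⟨n, hn⟩
  set N : ℕ := F.max' hFne with hN
  set w : ℝ := v - 1 / (N + 1) with hw
  have hwv : w < v := by
    have : (0:ℝ) < 1 / (N + 1) := by positivity
    simp [hw]; linarith
  have hψ : ∀ t : T, ∃ k, a k + μ * b t k ≤ w := by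
    intro t
    obtain ⟨n, hn, htn⟩ := mem_iUnion₂.1 (hF (mem_univ t))
    obtain ⟨k, hk⟩ := mem_iUnion.1 htn
    refine ⟨k, ?_⟩
    have hk' : f t (pts k) < (((v - 1 / (n + 1) - a k) / μ : ℝ) : EReal) := hk
    rw [hfb t k] at hk'
    have hre := EReal.coe_lt_coe_iff.1 hk'
    have hnN : (n : ℝ) + 1 ≤ (N : ℝ) + 1 := by
      have := F.le_max' n hn
      push_cast
      exact_mod_cast Nat.succ_le_succ this
    have hmono : 1 / ((N : ℝ) + 1) ≤ 1 / ((n : ℝ) + 1) :=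
      one_div_le_one_div_of_le (by positivity) hnN
    rw [lt_div_iff₀ hμ] at hre
    simp only [hw]
    linarith
  -- separation in Fin m → ℝ
  set Svec : Set (Fin m → ℝ) := {y | ∃ t : T, ∀ k, y k ≤ a k + μ * b t k} with hSvec
  set Q : Set (Fin m → ℝ) := {y | ∀ k, w < y k} with hQ
  have hQopen : IsOpen Q := by
    have : Q = ⋂ k, (fun y : Fin m → ℝ => y k) ⁻¹' Ioi w := by
      ext y; simp [hQ, mem_iInter]
    rw [this]
    exact isOpen_iInter_of_finite fun k => isOpen_Ioi.preimage (continuous_apply k)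
  have hQconv : Convex ℝ Q := by
    intro y hy y' hy' α β hα hβ hαβ k
    have hyk := hy k
    have hy'k := hy' k
    show w < α * y k + β * y' k
    rcases eq_or_lt_of_le hα with h0 | hαpos
    · have hβ1 : β = 1 := by linarith
      rw [← h0, hβ1]; simpa using hy'k
    · have p1 := mul_pos hαpos (sub_pos.2 hyk)
      have p2 := mul_nonneg hβ (sub_pos.2 hy'k).le
      have h4 : α * w + β * w = w := by rw [← add_mul, hαβ, one_mul]
      nlinarith [p1, p2, h4]
  have hSconv : Convex ℝ Svec := by
    rintro y ⟨t1, hy⟩ y' ⟨t2, hy'⟩ α β hα hβ hαβ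
    obtain ⟨t₀, ht₀⟩ := hconc 2 ![t1, t2] ![α, β]
      (by intro k; fin_cases k <;> simpa)
    refine ⟨t₀, fun k => ?_⟩
    have hx := ht₀ (pts k)
    simp only [Fin.sum_univ_two, Matrix.cons_val_zero, Matrix.cons_val_one,
      Matrix.head_cons] at hx
    rw [hαβ] at hx
    simp only [smulInf] at hx
    rw [if_neg (dAux_ftx_ne_top (hptsD k) t1), if_neg (dAux_ftx_ne_top (hptsD k) t2),
      if_neg (dAux_ftx_ne_top (hptsD k) t₀)] at hx
    rw [hfb t1 k, hfb t2 k, hfb t₀ k, ← EReal.coe_mul, ← EReal.coe_mul,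
      ← EReal.coe_mul, ← EReal.coe_add] at hx
    have hre : α * b t1 k + β * b t2 k ≤ b t₀ k := by
      have := EReal.coe_le_coe_iff.1 hx
      linarith [this]
    have h1 : α * y k ≤ α * (a k + μ * b t1 k) := mul_le_mul_of_nonneg_left (hy k) hα
    have h2 : β * y' k ≤ β * (a k + μ * b t2 k) := mul_le_mul_of_nonneg_left (hy' k) hβ
    have h3 : μ * (α * b t1 k + β * b t2 k) ≤ μ * b t₀ k :=
      mul_le_mul_of_nonneg_left hre hμ.le
    have h4 : α * (a k) + β * (a k) = a k := by rw [← add_mul, hαβ, one_mul]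
    show α * y k + β * y' k ≤ a k + μ * b t₀ k
    nlinarith [h1, h2, h3, h4]
  have hSne : Svec.Nonempty := by
    obtain ⟨t1⟩ := ‹Nonempty T›
    exact ⟨fun k => a k + μ * b t1 k, t1, fun k => le_refl _⟩
  have hQne : Q.Nonempty := ⟨fun _ => w + 1, fun k => by norm_num⟩
  have hdisj : Disjoint Q Svec := by
    rw [Set.disjoint_left]
    rintro y hyQ ⟨t, hyt⟩
    obtain ⟨k, hk⟩ := hψ t
    exact absurd ((hyt k).trans hk) (not_le.2 (hyQ k))
  obtain ⟨φ, u, hQu, hSu⟩ := geometric_hahn_banach_open hQconv hQopen hSconv hdisj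
  set e : Fin m → (Fin m → ℝ) := fun i j => if i = j then 1 else 0 with he
  have hφ : ∀ y : Fin m → ℝ, φ y = ∑ i, y i * φ (e i) := by
    intro y
    conv_lhs => rw [pi_eq_sum_univ y]
    rw [map_sum]
    exact Finset.sum_congr rfl fun i _ => by rw [map_smul]; rfl
  have he_nonpos : ∀ i, φ (e i) ≤ 0 := by
    intro i
    by_contra hp
    push_neg at hp
    set r : ℝ := max 0 ((u - φ (fun _ => w + 1)) / φ (e i)) with hr
    have hr0 : 0 ≤ r := le_max_left _ _
    have hyQ : ((fun _ => w + 1) + r • e i) ∈ Q := by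
      intro k
      show w < (w + 1) + r * (if i = k then 1 else 0)
      by_cases hik : i = k <;> simp [hik] <;> nlinarith
    have hlt := hQu _ hyQ
    rw [map_add, map_smul] at hlt
    have hge : u ≤ φ (fun _ => w + 1) + r • φ (e i) := by
      rcases le_or_gt (u - φ (fun _ => w + 1)) 0 with hle | hgt
      · have : (0:ℝ) ≤ r • φ (e i) := by
          simp only [smul_eq_mul]; positivity
        linarith
      · have hrr : (u - φ (fun _ => w + 1)) / φ (e i) ≤ r := le_max_right _ _
        have := (div_le_iff₀ hp).1 hrr
        simp only [smul_eq_mul]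
        linarith
    exact absurd hlt (not_lt.2 hge)
  set c : Fin m → ℝ := fun i => -φ (e i) with hc
  have hc0 : ∀ i, 0 ≤ c i := fun i => by simp [hc]; exact he_nonpos i
  set C : ℝ := ∑ i, c i with hC
  have hC0 : 0 ≤ C := Finset.sum_nonneg fun i _ => hc0 i
  have hCpos : 0 < C := by
    rcases hC0.eq_or_lt with h0 | h
    · exfalso
      have hall : ∀ i ∈ Finset.univ, c i = 0 :=
        (Finset.sum_eq_zero_iff_of_nonneg (fun i _ => hc0 i)).1 h0.symm
      have hφ0 : ∀ y, φ y = 0 := by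
        intro y
        rw [hφ y]
        refine Finset.sum_eq_zero fun i _ => ?_
        have : φ (e i) = 0 := by
          have := hall i (Finset.mem_univ i); simp [hc] at this; linarith [this]
        rw [this, mul_zero]
      obtain ⟨yq, hyq⟩ := hQne
      obtain ⟨zs, hzs⟩ := hSne
      have h1 := hQu yq hyq
      have h2 := hSu zs hzs
      rw [hφ0 yq] at h1
      rw [hφ0 zs] at h2
      linarith
    · exact h
  have hzineq : ∀ t : T, ∑ i, c i * (a i + μ * b t i) ≤ -u := by
    intro t
    have hz : (fun i => a i + μ * b t i) ∈ Svec := ⟨t, fun k => le_refl _⟩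
    have := hSu _ hz
    rw [hφ _] at this
    have heq : ∑ i, (a i + μ * b t i) * φ (e i) = -∑ i, c i * (a i + μ * b t i) := by
      rw [← Finset.sum_neg_distrib]
      exact Finset.sum_congr rfl fun i _ => by simp [hc]; ring
    rw [heq] at this
    linarith
  have huw : -u ≤ w * C := by
    by_contra hcon'
    push_neg at hcon'
    set ε : ℝ := (-u - w * C) / (2 * C) with hε
    have hεpos : 0 < ε := by
      apply div_pos; linarith; linarith
    have hyQ : (fun _ : Fin m => w + ε) ∈ Q := fun k => by
      show w < w + ε; linarith
    have := hQu _ hyQ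
    rw [hφ _] at this
    have heval : ∑ i, (w + ε) * φ (e i) = -((w + ε) * C) := by
      have h8 : (w + ε) * C = ∑ i, (w + ε) * c i := by rw [hC, Finset.mul_sum]
      rw [h8, ← Finset.sum_neg_distrib]
      exact Finset.sum_congr rfl fun i _ => by simp only [hc]; ring
    rw [heval] at this
    have hCε : ε * C = (-u - w * C) / 2 := by
      rw [hε]; field_simp
    have hexp : (w + ε) * C = w * C + ε * C := by ring
    clear_value ε C w
    linarith [this, hCε, hexp]
  set lamw : Fin m → ℝ := fun i => c i / C with hlamw
  have hlam0 : ∀ i ∈ Finset.univ, (0:ℝ) ≤ lamw i := fun i _ => div_nonneg (hc0 i) hC0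
  have hlam1 : ∑ i, lamw i = 1 := by
    rw [hlamw, ← Finset.sum_div, ← hC, div_self hCpos.ne']
  have hw2 : ∀ t : T, ∑ i, lamw i * (a i + μ * b t i) ≤ w := by
    intro t
    have heq : ∑ i, lamw i * (a i + μ * b t i)
        = (∑ i, c i * (a i + μ * b t i)) / C := by
      rw [Finset.sum_div]
      exact Finset.sum_congr rfl fun i _ => by rw [hlamw]; ring
    rw [heq, div_le_iff₀ hCpos]
    calc ∑ i, c i * (a i + μ * b t i) ≤ -u := hzineq t
      _ ≤ w * C := huw
  -- the contradiction point
  set xb : X := ∑ i, lamw i • pts i with hxb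
  have hf₀xb : f₀ xb ≤ ((∑ i, lamw i * a i : ℝ) : EReal) :=
    DualityJensenAux.jensen hf₀c hf₀p.2 Finset.univ lamw pts a hlam0 hlam1
      (fun i _ => le_of_eq (hf₀a i))
  have hftxb : ∀ t, f t xb ≤ ((∑ i, lamw i * b t i : ℝ) : EReal) := fun t =>
    DualityJensenAux.jensen (hfc t) ((hfp t).2) Finset.univ lamw pts (b t) hlam0 hlam1
      (fun i _ => le_of_eq (hfb t i))
  have hxbD : (⨆ t, f t xb) ≠ ⊤ := by
    have hbd : ∀ t, f t xb ≤ ((∑ i, lamw i * (⨆ s, f s (pts i)).toReal : ℝ) : EReal) :=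
      fun t => DualityJensenAux.jensen (hfc t) ((hfp t).2) Finset.univ lamw pts
        (fun i => (⨆ s, f s (pts i)).toReal) hlam0 hlam1
        (fun i _ => dAux_ftx_le_coe hfp (hptsD i) t)
    exact ne_top_of_le_ne_top (EReal.coe_ne_top _) (iSup_le hbd)
  have hxbf₀t : f₀ xb ≠ ⊤ := ne_top_of_le_ne_top (EReal.coe_ne_top _) hf₀xb
  set A : ℝ := (f₀ xb).toReal with hA
  have hf₀xb' : f₀ xb = ((A : ℝ) : EReal) := (EReal.coe_toReal hxbf₀t (hf₀p.2 xb)).symm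
  set B : ℝ := (⨆ t, f t xb).toReal with hB
  have hsupxb : (⨆ t, f t xb) = ((B : ℝ) : EReal) :=
    (EReal.coe_toReal hxbD (dAux_sup_ne_bot f hfp xb)).symm
  have hvAB : v ≤ A + μ * B := by
    have := hkey xb hxbD
    rw [hf₀xb', hsupxb, ← EReal.coe_mul, ← EReal.coe_add] at this
    exact EReal.coe_le_coe_iff.1 this
  have hAbound : A ≤ ∑ i, lamw i * a i := by
    have := EReal.toReal_le_toReal hf₀xb (hf₀p.2 xb) (EReal.coe_ne_top _)
    simpa [hA] using this
  have hBbound : B ≤ (w - A) / μ := by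
    have hsup_le : (⨆ t, f t xb) ≤ (((w - A) / μ : ℝ) : EReal) := by
      refine iSup_le fun t => ?_
      refine (hftxb t).trans (EReal.coe_le_coe_iff.2 ?_)
      have hsum : ∑ i, lamw i * (a i + μ * b t i)
          = ∑ i, lamw i * a i + μ * ∑ i, lamw i * b t i := by
        rw [Finset.mul_sum, ← Finset.sum_add_distrib]
        exact Finset.sum_congr rfl fun i _ => by ring
      have h5 := hw2 t
      rw [hsum] at h5
      rw [le_div_iff₀ hμ]
      nlinarith [hAbound]
    have := EReal.toReal_le_toReal hsup_le (dAux_sup_ne_bot f hfp xb) (EReal.coe_ne_top _)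
    simpa [hB] using this
  have : v ≤ w := by
    have h6 : μ * B ≤ w - A := by
      have := mul_le_mul_of_nonneg_left hBbound hμ.le
      rwa [mul_div_cancel₀ _ hμ.ne'] at this
    linarith
  linarith
end Fan


/-- (Lagrangian duality in the concave-like setting.) Let `T` be a
compact space, `{f_t}` a concave-like family of proper convex lsc functions with
`dom f ≠ ∅` (`f := sup_t f_t`) and `t ↦ f_t(x)` upper semicontinuous for each
`x ∈ dom f`. If `(P)` has finite value and satisfies the Slater condition, then
`v(P) = max_{t ∈ T, λ ≥ 0} inf_{x ∈ dom f} ( f₀(x) + λ f_t(x) )`, the maximum being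
attained; here `0·(+∞) = +∞`, so `0·f_t = I_{dom f_t}`. -/
theorem value_eq_max_lagrangian_concaveLike
    {X : Type*} [NormedAddCommGroup X] [NormedSpace ℝ X] [CompleteSpace X]
    {T : Type*} [TopologicalSpace T] [CompactSpace T] [Nonempty T]
    (f : T → X → EReal)
    (hfp : ∀ t, ProperER (f t)) (hfc : ∀ t, ConvexER (f t))
    (hflsc : ∀ t, LowerSemicontinuous (f t))
    (hconc : ConcaveLike f)
    (hdom : (edom (fun x => ⨆ t, f t x)).Nonempty)
    (husc : ∀ x ∈ edom (fun x => ⨆ t, f t x), UpperSemicontinuous (fun t => f t x))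
    (f₀ : X → EReal) (hf₀p : ProperER f₀) (hf₀c : ConvexER f₀)
    (hreal : ∃ r : ℝ, (⨅ x ∈ {x : X | ∀ t, f t x ≤ 0}, f₀ x) = (r : EReal))
    (hslater : ∃ x₀, f₀ x₀ ≠ ⊤ ∧ (⨆ t, f t x₀) < 0) :
    ∃ (t : T) (lam : ℝ), 0 ≤ lam ∧
      (⨅ x ∈ {x : X | ∀ s, f s x ≤ 0}, f₀ x) =
        (⨅ x ∈ edom (fun y => ⨆ s, f s y), (f₀ x + smulInf lam (f t x))) ∧
      ∀ (t' : T) (lam' : ℝ), 0 ≤ lam' →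
        (⨅ x ∈ edom (fun y => ⨆ s, f s y), (f₀ x + smulInf lam' (f t' x))) ≤
          ⨅ x ∈ {x : X | ∀ s, f s x ≤ 0}, f₀ x := by
  classical
  obtain ⟨v, hv⟩ := hreal
  -- weak duality
  have hweak : ∀ (t' : T) (lam' : ℝ), 0 ≤ lam' →
      (⨅ x ∈ edom (fun y => ⨆ s, f s y), (f₀ x + smulInf lam' (f t' x))) ≤
        ⨅ x ∈ {x : X | ∀ s, f s x ≤ 0}, f₀ x := by
    intro t' lam' hlam'
    refine le_iInf₂ fun x hx => ?_
    have hx' : ∀ s, f s x ≤ 0 := hx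
    have hsup : (⨆ s, f s x) ≤ 0 := iSup_le hx'
    have hxD : x ∈ edom (fun y => ⨆ s, f s y) := by
      show (⨆ s, f s x) ≠ ⊤
      intro h; rw [h] at hsup; simp at hsup
    refine le_trans (iInf₂_le x hxD) ?_
    have hft : f t' x ≠ ⊤ := dAux_ftx_ne_top hxD t'
    have hfbb : f t' x = (((f t' x).toReal : ℝ) : EReal) :=
      (EReal.coe_toReal hft ((hfp t').2 x)).symm
    have hb0 : (f t' x).toReal ≤ 0 := by
      have := EReal.toReal_le_toReal (hx' t') ((hfp t').2 x) (by norm_num)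
      simpa using this
    have hsm : smulInf lam' (f t' x) ≤ 0 := by
      rw [smulInf, if_neg hft, hfbb, ← EReal.coe_mul]
      rw [show ((0:EReal) = ((0:ℝ) : EReal)) from rfl]
      exact EReal.coe_le_coe_iff.2 (mul_nonpos_of_nonneg_of_nonpos hlam' hb0)
    calc f₀ x + smulInf lam' (f t' x) ≤ f₀ x + 0 := add_le_add le_rfl hsm
      _ = f₀ x := add_zero _
  -- strong duality
  obtain ⟨μ, hμ0, hkey⟩ := dAux_exists_mu f hfp hfc f₀ hf₀p hf₀c v hv hslater
  have hstrong : ∃ t : T, ∀ x, (⨆ s, f s x) ≠ ⊤ →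
      (v : EReal) ≤ f₀ x + smulInf μ (f t x) := by
    rcases hμ0.eq_or_lt with hz | hpos
    · -- μ = 0
      refine ⟨Classical.arbitrary T, fun x hx => ?_⟩
      have hsupb : (⨆ s, f s x) = (((⨆ s, f s x).toReal : ℝ) : EReal) :=
        (EReal.coe_toReal hx (dAux_sup_ne_bot f hfp x)).symm
      have h1 := hkey x hx
      rw [← hz, hsupb, ← EReal.coe_mul, zero_mul, EReal.coe_zero, add_zero] at h1
      have hft : f (Classical.arbitrary T) x ≠ ⊤ := dAux_ftx_ne_top hx _
      have hfbb : f (Classical.arbitrary T) x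
          = (((f (Classical.arbitrary T) x).toReal : ℝ) : EReal) :=
        (EReal.coe_toReal hft ((hfp _).2 x)).symm
      rw [← hz, smulInf, if_neg hft, hfbb, ← EReal.coe_mul, zero_mul,
        EReal.coe_zero, add_zero]
      exact h1
    · obtain ⟨t₀, ht₀⟩ := dAux_fan f hfp hfc hconc (fun x hx => husc x hx) f₀ hf₀p hf₀c
        v μ hpos hkey
      refine ⟨t₀, fun x hx => ?_⟩
      have hft : f t₀ x ≠ ⊤ := dAux_ftx_ne_top hx t₀
      rw [smulInf, if_neg hft]
      exact ht₀ x hx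
  obtain ⟨t, ht⟩ := hstrong
  refine ⟨t, μ, hμ0, ?_, hweak⟩
  rw [hv]
  refine le_antisymm ?_ ?_
  · exact le_iInf₂ fun x hx => ht x hx
  · have := hweak t μ hμ0
    rwa [hv] at this
end
end
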